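/- arXiv:2404.16108 — 4 statements merged into one kernel-verified Lean document; each statement's English description precedes it below -/
import Mathlib

section
/- Let z ∈ ℤ₊^p be fixed, let M = (M_1,…,M_p) be a square-integrable ℤ^p-valued random vector with M_i ≥ −z_i almost surely, and let {X_{j,i} : j ∈ ℕ, i ∈ {1,…,p}} be square-integrable ℤ₊^p-valued random vectors, identically distributed in j for each fixed i, with the whole family {X_{j,i}} independent and independent of M. Set m_i = E[X_{1,i}], m the p×p matrix with columns m_1,…,m_p, Σ_i = Cov(X_{1,i}) (the p×p covariance matrix), and S = Σ_{i=1}^p Σ_{j=1}^{z_i+M_i} X_{j,i}. Then the covariance matrix of S satisfies Cov(S) = Σ_{i=1}^p (z_i + E[M_i]) Σ_i + m Cov(M) m^T, entrywise: Cov(S)_{a,b} = Σ_{i=1}^p (z_i+E[M_i]) (Σ_i)_{a,b} + (m Cov(M) m^T)_{a,b}. (This is the one-step version of equation (4) of Proposition 1.) -/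
open MeasureTheory ProbabilityTheory

private lemma l2_mul_int {Ω : Type*} [MeasureSpace Ω] {f g : Ω → ℝ}
    (hf : MemLp f 2 ℙ) (hg : MemLp g 2 ℙ) :
    Integrable (fun ω => f ω * g ω) ℙ := by
  have h : MemLp (f • g) 1 ℙ :=
    hg.smul hf (hpqr := ⟨by simp [one_div, ENNReal.inv_two_add_inv_two]⟩)
  exact memLp_one_iff_integrable.mp h

private lemma cov_expand {Ω : Type*} [MeasureSpace Ω] [IsProbabilityMeasure (ℙ : Measure Ω)]
    {f g : Ω → ℝ} (hf : Integrable f ℙ) (hg : Integrable g ℙ)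
    (hfg : Integrable (fun ω => f ω * g ω) ℙ) (c d : ℝ) :
    ∫ ω, (f ω - c) * (g ω - d)
      = (∫ ω, f ω * g ω) - c * (∫ ω, g ω) - d * (∫ ω, f ω) + c * d := by
  have h : (fun ω => (f ω - c) * (g ω - d))
      = fun ω => (f ω * g ω - c * g ω - d * f ω) + c * d := by funext ω; ring
  have h1 : Integrable (fun ω => f ω * g ω - c * g ω) ℙ := hfg.sub (hg.const_mul c)
  have h2 : Integrable (fun ω => f ω * g ω - c * g ω - d * f ω) ℙ := h1.sub (hf.const_mul d)
  rw [h, integral_add h2 (integrable_const _), integral_sub h1 (hf.const_mul d),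
      integral_sub hfg (hg.const_mul c), integral_const_mul, integral_const_mul,
      integral_const]
  simp
private lemma transfer {Ω : Type*} [MeasureSpace Ω] [IsProbabilityMeasure (ℙ : Measure Ω)]
    {ι : Type*} [Countable ι] [MeasurableSpace ι] [MeasurableSingletonClass ι]
    (K : Ω → ι) (hK : Measurable K)
    (g : Ω → ℝ) (hg0 : ∀ ω, 0 ≤ g ω) (hgm : AEStronglyMeasurable g ℙ)
    (G : ι → Ω → ℝ) (hG0 : ∀ u ω, 0 ≤ G u ω)
    (hGg : ∀ u ω, K ω = u → g ω = G u ω)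
    (hGint : ∀ u, Integrable (G u) ℙ)
    (hGind : ∀ u, IndepFun ((K ⁻¹' {u}).indicator (fun _ => (1:ℝ))) (G u) ℙ)
    (c : ι → ℝ) (hc : ∀ u, ∫ ω, G u ω = c u)
    (hcK : Integrable (fun ω => c (K ω)) ℙ) :
    Integrable g ℙ ∧ ∫ ω, g ω = ∫ ω, c (K ω) := by
  have hA : ∀ u : ι, MeasurableSet (K ⁻¹' {u}) := fun u => hK (measurableSet_singleton u)
  have hc0 : ∀ u, 0 ≤ c u := fun u => (hc u) ▸ integral_nonneg (hG0 u)
  have hdisj : Pairwise (Function.onFun Disjoint fun u : ι => K ⁻¹' {u}) := by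
    intro u v huv
    simp only [Function.onFun, Set.disjoint_left]
    rintro ω (h1 : K ω = u) (h2 : K ω = v)
    exact huv (h1 ▸ h2 ▸ rfl)
  have hunion : (⋃ u : ι, K ⁻¹' {u}) = Set.univ := by ext ω; simp
  have hset : ∀ u, ∫ ω in K ⁻¹' {u}, G u ω ∂ℙ = (ℙ (K ⁻¹' {u})).toReal * c u := by
    intro u
    have hχ : Integrable ((K ⁻¹' {u}).indicator (fun _ => (1:ℝ))) ℙ :=
      (integrable_const (1:ℝ)).indicator (hA u)
    have hmul := (hGind u).integral_mul_eq_mul_integral hχ.1 (hGint u).1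
    have hprod : (K ⁻¹' {u}).indicator (fun _ => (1:ℝ)) * G u
        = (K ⁻¹' {u}).indicator (G u) := by
      funext ω
      by_cases h : ω ∈ K ⁻¹' {u} <;> simp [Set.indicator, h]
    rw [hprod] at hmul
    rw [← integral_indicator (hA u), hmul, integral_indicator_const (1:ℝ) (hA u), hc u]
    simp [mul_comm, measureReal_def]
  -- lintegral computation
  have key : ∫⁻ ω, ENNReal.ofReal (g ω) ∂ℙ = ∫⁻ ω, ENNReal.ofReal (c (K ω)) ∂ℙ := by
    rw [← setLIntegral_univ, ← hunion, lintegral_iUnion hA hdisj,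
        ← setLIntegral_univ (μ := ℙ) (f := fun ω => ENNReal.ofReal (c (K ω))), ← hunion,
        lintegral_iUnion hA hdisj]
    refine tsum_congr fun u => ?_
    have h1 : ∫⁻ ω in K ⁻¹' {u}, ENNReal.ofReal (g ω) ∂ℙ
        = ∫⁻ ω in K ⁻¹' {u}, ENNReal.ofReal (G u ω) ∂ℙ :=
      setLIntegral_congr_fun (hA u) (fun ω hω =>
        by rw [hGg u ω hω])
    have h2 : ∫⁻ ω in K ⁻¹' {u}, ENNReal.ofReal (G u ω) ∂ℙ
        = ENNReal.ofReal (∫ ω in K ⁻¹' {u}, G u ω ∂ℙ) :=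
      (ofReal_integral_eq_lintegral_ofReal ((hGint u).restrict)
        (Filter.Eventually.of_forall (hG0 u))).symm
    have h3 : ∫⁻ ω in K ⁻¹' {u}, ENNReal.ofReal (c (K ω)) ∂ℙ
        = ENNReal.ofReal (c u) * ℙ (K ⁻¹' {u}) := by
      rw [setLIntegral_congr_fun (hA u)
        (fun ω hω => by rw [show K ω = u from hω]), setLIntegral_const]
    rw [h1, h2, hset u, h3, ENNReal.ofReal_mul ENNReal.toReal_nonneg,
        ENNReal.ofReal_toReal (measure_ne_top _ _), mul_comm]
  have hfin : ∫⁻ ω, ENNReal.ofReal (c (K ω)) ∂ℙ ≠ ⊤ := by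
    rw [← ofReal_integral_eq_lintegral_ofReal hcK
      (Filter.Eventually.of_forall fun ω => hc0 (K ω))]
    exact ENNReal.ofReal_ne_top
  have hgint : Integrable g ℙ := by
    refine ⟨hgm, ?_⟩
    rw [hasFiniteIntegral_iff_ofReal (Filter.Eventually.of_forall hg0), key]
    exact hfin.lt_top
  refine ⟨hgint, ?_⟩
  have := key
  rw [← ofReal_integral_eq_lintegral_ofReal hgint (Filter.Eventually.of_forall hg0),
      ← ofReal_integral_eq_lintegral_ofReal hcK
        (Filter.Eventually.of_forall fun ω => hc0 (K ω))] at this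
  exact (ENNReal.ofReal_eq_ofReal_iff (integral_nonneg hg0)
    (integral_nonneg fun ω => hc0 (K ω))).mp this

set_option maxHeartbeats 1000000

/-- One-step version of equation (4) of Proposition 1: with the notation of Proposition 1,
the covariance matrix of the random sum `S = Σ_i Σ_{j=1}^{z i + M i} X j i` satisfies
`Cov(S) = Σ_i (z i + E[M i]) Σ_i + m Cov(M) mᵀ`, entrywise. -/
theorem covariance_of_random_sum
    {Ω : Type*} [MeasureSpace Ω] [IsProbabilityMeasure (ℙ : Measure Ω)]
    (p : ℕ) (hp : 0 < p) (z : Fin p → ℕ)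
    (M : Ω → Fin p → ℤ) (hMmeas : Measurable M)
    (hMsq : ∀ i, MemLp (fun ω => (M ω i : ℝ)) 2 ℙ)
    (hMz : ∀ ω i, -(z i : ℤ) ≤ M ω i)
    (X : ℕ → Fin p → Ω → Fin p → ℕ) (hXmeas : ∀ j i, Measurable (X j i))
    (hXsq : ∀ j i a, MemLp (fun ω => (X j i ω a : ℝ)) 2 ℙ)
    (hXid : ∀ j i, Measure.map (X j i) ℙ = Measure.map (X 0 i) ℙ)
    (hindep : iIndepFun
      (fun o : Option (ℕ × Fin p) =>
        Option.elim o M (fun ji ω a => ((X ji.1 ji.2 ω a : ℤ)))) ℙ)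
    (S : Ω → Fin p → ℕ)
    (hS : ∀ ω a, S ω a = ∑ i, ∑ j ∈ Finset.range (((z i : ℤ) + M ω i).toNat), X j i ω a)
    -- the offspring means `m i = E[X_{1,i}]` (a vector for each type `i`)
    (m : Fin p → Fin p → ℝ) (hm : ∀ i a, m i a = ∫ ω, (X 0 i ω a : ℝ))
    -- the offspring covariance matrices `Σ_i = Cov(X_{1,i})`
    (Sx : Fin p → Fin p → Fin p → ℝ)
    (hSx : ∀ i a b, Sx i a b =
      ∫ ω, ((X 0 i ω a : ℝ) - m i a) * ((X 0 i ω b : ℝ) - m i b))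
    -- the covariance matrix of the migration vector `M`
    (CM : Fin p → Fin p → ℝ)
    (hCM : ∀ a b, CM a b =
      ∫ ω, ((M ω a : ℝ) - ∫ ω', (M ω' a : ℝ)) * ((M ω b : ℝ) - ∫ ω', (M ω' b : ℝ))) :
    ∀ a b,
      ∫ ω, ((S ω a : ℝ) - ∫ ω', (S ω' a : ℝ)) * ((S ω b : ℝ) - ∫ ω', (S ω' b : ℝ)) =
        (∑ i, ((z i : ℝ) + ∫ ω, (M ω i : ℝ)) * Sx i a b) +
          ∑ i, ∑ j, m i a * CM i j * m j b := by
  classical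
  intro a b
  -- the family of independent random vectors
  set f : Option (ℕ × Fin p) → Ω → Fin p → ℤ := fun o =>
    Option.elim o M (fun ji ω a => ((X ji.1 ji.2 ω a : ℤ))) with hfdef
  have hfmeas : ∀ o, Measurable (f o) := by
    rintro (_ | q)
    · exact hMmeas
    · exact measurable_pi_lambda _ fun a' =>
        Measurable.of_discrete.comp ((measurable_pi_apply a').comp (hXmeas q.1 q.2))
  -- the count vector `K`
  set K : Ω → Fin p → ℕ := fun ω i => ((z i : ℤ) + M ω i).toNat with hKdef
  have hKmeas : Measurable K :=
    (Measurable.of_discrete (f := fun v : Fin p → ℤ => fun i => ((z i : ℤ) + v i).toNat)).comp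
      hMmeas
  have hKcast : ∀ ω i, ((K ω i : ℝ)) = (z i : ℝ) + (M ω i : ℝ) := by
    intro ω i
    have h0 : (0:ℤ) ≤ (z i : ℤ) + M ω i := by linarith [hMz ω i]
    have h1 : ((K ω i : ℤ)) = (z i : ℤ) + M ω i := Int.toNat_of_nonneg h0
    calc ((K ω i : ℝ)) = (((K ω i : ℤ) : ℝ)) := by push_cast; ring
    _ = (((z i : ℤ) + M ω i : ℤ) : ℝ) := by rw [h1]
    _ = (z i : ℝ) + (M ω i : ℝ) := by push_cast; ring
  -- the deterministic partial sums `T`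
  set T : (Fin p → ℕ) → Fin p → Ω → ℝ := fun u a' ω =>
    ∑ i, ∑ j ∈ Finset.range (u i), (X j i ω a' : ℝ) with hTdef
  have hST : ∀ ω a', (S ω a' : ℝ) = T (K ω) a' ω := by
    intro ω a'
    rw [hS ω a']
    push_cast
    rfl
  -- the full offspring array `Y`, independent of `M`
  set Y : Ω → (ℕ × Fin p) → Fin p → ℤ := fun ω q a' => (X q.1 q.2 ω a' : ℤ) with hYdef
  have hYmeas : Measurable Y := measurable_pi_lambda _ fun q => hfmeas (some q)
  have hMY : IndepFun M Y ℙ := by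
    have h1 : iIndep (fun o => MeasurableSpace.comap (f o) inferInstance) ℙ :=
      (iIndepFun_iff_iIndep _ _ _).mp hindep
    have h2 := indep_iSup_of_disjoint (fun o => measurable_iff_comap_le.mp (hfmeas o)) h1
      (S := {none}) (T := {o : Option (ℕ × Fin p) | o ≠ none})
      (by simp [Set.disjoint_left])
    rw [IndepFun_iff_Indep]
    refine indep_of_indep_of_le_right (indep_of_indep_of_le_left h2 ?_) ?_
    · exact le_biSup (fun o => MeasurableSpace.comap (f o) MeasurableSpace.pi)
        (Set.mem_singleton none)
    · set msup := ⨆ o ∈ {o : Option (ℕ × Fin p) | o ≠ none},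
        MeasurableSpace.comap (f o) MeasurableSpace.pi with hmsup
      have hY' : @Measurable Ω _ msup MeasurableSpace.pi Y := by
        refine @measurable_pi_lambda Ω (ℕ × Fin p) (fun _ => Fin p → ℤ) msup _ Y fun q => ?_
        have hle : MeasurableSpace.comap (f (some q)) MeasurableSpace.pi ≤ msup :=
          le_biSup (fun o => MeasurableSpace.comap (f o) MeasurableSpace.pi)
            (show (some q : Option (ℕ × Fin p)) ∈ {o : Option (ℕ × Fin p) | o ≠ none} by simp)
        exact (measurable_iff_comap_le (m₁ := msup)).mpr hle
      exact (measurable_iff_comap_le (m₁ := msup)).mp hY'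
  -- basic integrability
  have hXint : ∀ j i a', Integrable (fun ω => (X j i ω a' : ℝ)) ℙ :=
    fun j i a' => (hXsq j i a').integrable one_le_two
  have hXXint : ∀ j i j' i' a' b',
      Integrable (fun ω => (X j i ω a' : ℝ) * (X j' i' ω b' : ℝ)) ℙ :=
    fun j i j' i' a' b' => l2_mul_int (hXsq j i a') (hXsq j' i' b')
  have hMint : ∀ i, Integrable (fun ω => (M ω i : ℝ)) ℙ :=
    fun i => (hMsq i).integrable one_le_two
  -- identical distribution
  have hID : ∀ (g : (Fin p → ℕ) → ℝ) (j : ℕ) (i : Fin p),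
      ∫ ω, g (X j i ω) = ∫ ω, g (X 0 i ω) := by
    intro g j i
    rw [← integral_map (hXmeas j i).aemeasurable Measurable.of_discrete.aestronglyMeasurable,
        hXid j i,
        integral_map (hXmeas 0 i).aemeasurable Measurable.of_discrete.aestronglyMeasurable]
  have hID1 : ∀ (j : ℕ) (i a' : Fin p), ∫ ω, (X j i ω a' : ℝ) = m i a' := by
    intro j i a'
    rw [hm i a']
    exact hID (fun v => (v a' : ℝ)) j i
  have hq : ∀ (j : ℕ) (i a' b' : Fin p),
      ∫ ω, (X j i ω a' : ℝ) * (X j i ω b' : ℝ) = Sx i a' b' + m i a' * m i b' := by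
    intro j i a' b'
    have h1 : ∫ ω, (X j i ω a' : ℝ) * (X j i ω b' : ℝ)
        = ∫ ω, (X 0 i ω a' : ℝ) * (X 0 i ω b' : ℝ) :=
      hID (fun v => (v a' : ℝ) * (v b' : ℝ)) j i
    have h2 := cov_expand (hXint 0 i a') (hXint 0 i b') (hXXint 0 i 0 i a' b')
      (m i a') (m i b')
    rw [hSx i a' b', h2, hID1 0 i a', hID1 0 i b', h1]
    ring
  have hcast : ∀ (j : ℕ) (i a' : Fin p) (ω : Ω),
      (((X j i ω a' : ℤ)) : ℝ) = ((X j i ω a' : ℕ) : ℝ) := by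
    intro j i a' ω; push_cast; ring
  have hcross : ∀ (j : ℕ) (i : Fin p) (j' : ℕ) (i' : Fin p) (a' b' : Fin p),
      ((j, i) : ℕ × Fin p) ≠ (j', i') →
      ∫ ω, (X j i ω a' : ℝ) * (X j' i' ω b' : ℝ) = m i a' * m i' b' := by
    intro j i j' i' a' b' hne
    have hne' : (some (j, i) : Option (ℕ × Fin p)) ≠ some (j', i') := by simpa using hne
    have hI : IndepFun (f (some (j, i))) (f (some (j', i'))) ℙ :=
      hindep.indepFun hne'
    have hI2 := hI.comp (φ := fun v : Fin p → ℤ => ((v a' : ℤ) : ℝ))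
      (ψ := fun v : Fin p → ℤ => ((v b' : ℤ) : ℝ))
      Measurable.of_discrete Measurable.of_discrete
    have hI3 : IndepFun (fun ω => (X j i ω a' : ℝ)) (fun ω => (X j' i' ω b' : ℝ)) ℙ := by
      have e1 : (fun v : Fin p → ℤ => ((v a' : ℤ) : ℝ)) ∘ f (some (j, i))
          = fun ω => (X j i ω a' : ℝ) := by
        funext ω; exact hcast j i a' ω
      have e2 : (fun v : Fin p → ℤ => ((v b' : ℤ) : ℝ)) ∘ f (some (j', i'))
          = fun ω => (X j' i' ω b' : ℝ) := by
        funext ω; exact hcast j' i' b' ω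
      rwa [e1, e2] at hI2
    have := hI3.integral_mul_eq_mul_integral (hXint j i a').1 (hXint j' i' b').1
    rw [show ((fun ω => (X j i ω a' : ℝ)) * fun ω => (X j' i' ω b' : ℝ))
        = fun ω => (X j i ω a' : ℝ) * (X j' i' ω b' : ℝ) from rfl] at this
    rw [this, hID1 j i a', hID1 j' i' b']
  -- properties of T
  have hTint : ∀ u a', Integrable (T u a') ℙ := by
    intro u a'
    exact integrable_finset_sum _ fun i _ =>
      integrable_finset_sum _ fun j _ => hXint j i a'
  have hTmem : ∀ u a', MemLp (T u a') 2 ℙ := by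
    intro u a'
    have h : T u a' = ∑ i : Fin p, ∑ j ∈ Finset.range (u i),
        (fun ω => (X j i ω a' : ℝ)) := by
      funext ω; simp [hTdef]
    rw [h]
    exact memLp_finset_sum' _ fun i _ => memLp_finset_sum' _ fun j _ => hXsq j i a'
  have hTTint : ∀ u a' b', Integrable (fun ω => T u a' ω * T u b' ω) ℙ :=
    fun u a' b' => l2_mul_int (hTmem u a') (hTmem u b')
  have hT0 : ∀ u a' ω, 0 ≤ T u a' ω := by
    intro u a' ω
    exact Finset.sum_nonneg fun i _ => Finset.sum_nonneg fun j _ => Nat.cast_nonneg _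
  have hTmeas : ∀ u a', Measurable (T u a') := by
    intro u a'
    exact Finset.measurable_sum _ fun i _ => Finset.measurable_sum _ fun j _ =>
      Measurable.of_discrete.comp ((measurable_pi_apply a').comp (hXmeas j i))
  have hET : ∀ u a', ∫ ω, T u a' ω = ∑ i, (u i : ℝ) * m i a' := by
    intro u a'
    rw [integral_finset_sum _ fun i _ => integrable_finset_sum _ fun j _ => hXint j i a']
    refine Finset.sum_congr rfl fun i _ => ?_
    rw [integral_finset_sum _ fun j _ => hXint j i a']
    rw [Finset.sum_congr rfl fun j _ => hID1 j i a']
    simp [mul_comm]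
  have hETT : ∀ u a' b', ∫ ω, T u a' ω * T u b' ω
      = (∑ i, (u i : ℝ) * Sx i a' b')
        + (∑ i, (u i : ℝ) * m i a') * (∑ i, (u i : ℝ) * m i b') := by
    intro u a' b'
    set D := Finset.univ.sigma (fun i : Fin p => Finset.range (u i)) with hD
    have hTs : ∀ (c' : Fin p) ω, T u c' ω = ∑ q ∈ D, (X q.2 q.1 ω c' : ℝ) := by
      intro c' ω; rw [hD, Finset.sum_sigma]
    have hintq : ∀ q r : (Σ _ : Fin p, ℕ),
        ∫ ω, (X q.2 q.1 ω a' : ℝ) * (X r.2 r.1 ω b' : ℝ)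
          = m q.1 a' * m r.1 b' + (if q = r then Sx q.1 a' b' else 0) := by
      intro q r
      by_cases h : q = r
      · subst h
        rw [hq q.2 q.1 a' b', if_pos rfl]; ring
      · have hne : ((q.2, q.1) : ℕ × Fin p) ≠ (r.2, r.1) := by
          intro hc
          apply h
          have h1 := congrArg Prod.fst hc
          have h2 := congrArg Prod.snd hc
          exact Sigma.ext h2 (heq_of_eq h1)
        rw [hcross q.2 q.1 r.2 r.1 a' b' hne, if_neg h, add_zero]
    have hexp : (fun ω => T u a' ω * T u b' ω)
        = fun ω => ∑ q ∈ D, ∑ r ∈ D, (X q.2 q.1 ω a' : ℝ) * (X r.2 r.1 ω b' : ℝ) := by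
      funext ω; rw [hTs a' ω, hTs b' ω, Finset.sum_mul_sum]
    rw [hexp, integral_finset_sum _ fun q _ =>
      integrable_finset_sum _ fun r _ => hXXint q.2 q.1 r.2 r.1 a' b']
    have hper : ∀ q ∈ D, (∫ ω, ∑ r ∈ D, (X q.2 q.1 ω a' : ℝ) * (X r.2 r.1 ω b' : ℝ))
        = ∑ r ∈ D, (m q.1 a' * m r.1 b' + if q = r then Sx q.1 a' b' else 0) := by
      intro q _
      rw [integral_finset_sum _ fun r _ => hXXint q.2 q.1 r.2 r.1 a' b']
      exact Finset.sum_congr rfl fun r _ => hintq q r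
    rw [Finset.sum_congr rfl hper]
    have hsplit : ∑ q ∈ D, ∑ r ∈ D, (m q.1 a' * m r.1 b' + if q = r then Sx q.1 a' b' else 0)
        = (∑ q ∈ D, ∑ r ∈ D, m q.1 a' * m r.1 b')
          + ∑ q ∈ D, ∑ r ∈ D, (if q = r then Sx q.1 a' b' else 0) := by
      rw [← Finset.sum_add_distrib]
      exact Finset.sum_congr rfl fun q _ => by rw [← Finset.sum_add_distrib]
    have hsum1 : ∀ (c' : Fin p), ∑ q ∈ D, m q.1 c' = ∑ i, (u i : ℝ) * m i c' := by
      intro c'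
      rw [hD, Finset.sum_sigma]
      exact Finset.sum_congr rfl fun i _ => by
        simp [Finset.sum_const, Finset.card_range, nsmul_eq_mul]
    have hmm : ∑ q ∈ D, ∑ r ∈ D, m q.1 a' * m r.1 b'
        = (∑ i, (u i : ℝ) * m i a') * (∑ i, (u i : ℝ) * m i b') := by
      rw [← Finset.sum_mul_sum, hsum1 a', hsum1 b']
    have hdiag : ∑ q ∈ D, ∑ r ∈ D, (if q = r then Sx q.1 a' b' else 0)
        = ∑ i, (u i : ℝ) * Sx i a' b' := by
      have h1 : ∀ q ∈ D, (∑ r ∈ D, if q = r then Sx q.1 a' b' else 0) = Sx q.1 a' b' := by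
        intro q hqD
        rw [Finset.sum_ite_eq D q (fun _ => Sx q.1 a' b'), if_pos hqD]
      rw [Finset.sum_congr rfl h1, hD, Finset.sum_sigma]
      exact Finset.sum_congr rfl fun i _ => by
        simp [Finset.sum_const, Finset.card_range, nsmul_eq_mul]
    rw [hsplit, hmm, hdiag]
    ring
  -- independence of indicator of `{K = u}` and functions of the offspring array
  have hind : ∀ (u : Fin p → ℕ) (G : Ω → ℝ),
      (∃ ψ : ((ℕ × Fin p) → Fin p → ℤ) → ℝ, Measurable ψ ∧ ψ ∘ Y = G) →
      IndepFun ((K ⁻¹' {u}).indicator (fun _ => (1:ℝ))) G ℙ := by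
    rintro u G ⟨ψ, hψ, hψY⟩
    have hφ : Measurable
        (((fun v : Fin p → ℤ => fun i => ((z i : ℤ) + v i).toNat) ⁻¹' {u}).indicator
          (fun _ => (1:ℝ))) := Measurable.of_discrete
    have h := hMY.comp hφ hψ
    have e1 : (((fun v : Fin p → ℤ => fun i => ((z i : ℤ) + v i).toNat) ⁻¹' {u}).indicator
        (fun _ => (1:ℝ))) ∘ M = (K ⁻¹' {u}).indicator (fun _ => (1:ℝ)) := by
      funext ω
      simp only [Function.comp_apply, Set.indicator_apply, Set.mem_preimage,
        Set.mem_singleton_iff]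
      rfl
    rwa [e1, hψY] at h
  have hψa : ∀ (u : Fin p → ℕ) (a' : Fin p),
      (fun y : (ℕ × Fin p) → Fin p → ℤ =>
        ∑ i, ∑ j ∈ Finset.range (u i), ((y (j, i) a' : ℤ) : ℝ)) ∘ Y = T u a' := by
    intro u a'
    funext ω
    exact Finset.sum_congr rfl fun i _ => Finset.sum_congr rfl fun j _ => hcast j i a' ω
  have hψmeas : ∀ (u : Fin p → ℕ) (a' : Fin p),
      Measurable (fun y : (ℕ × Fin p) → Fin p → ℤ =>
        ∑ i, ∑ j ∈ Finset.range (u i), ((y (j, i) a' : ℤ) : ℝ)) := by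
    intro u a'
    exact Finset.measurable_sum _ fun i _ => Finset.measurable_sum _ fun j _ =>
      Measurable.of_discrete.comp ((measurable_pi_apply a').comp (measurable_pi_apply (j, i)))
  have hind1 : ∀ (u : Fin p → ℕ) (a' : Fin p),
      IndepFun ((K ⁻¹' {u}).indicator (fun _ => (1:ℝ))) (T u a') ℙ :=
    fun u a' => hind u (T u a') ⟨_, hψmeas u a', hψa u a'⟩
  have hind2 : ∀ (u : Fin p → ℕ) (a' b' : Fin p),
      IndepFun ((K ⁻¹' {u}).indicator (fun _ => (1:ℝ)))
        (fun ω => T u a' ω * T u b' ω) ℙ := by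
    intro u a' b'
    refine hind u _ ⟨fun y => (∑ i, ∑ j ∈ Finset.range (u i), ((y (j, i) a' : ℤ) : ℝ))
      * (∑ i, ∑ j ∈ Finset.range (u i), ((y (j, i) b' : ℤ) : ℝ)),
      (hψmeas u a').mul (hψmeas u b'), ?_⟩
    funext ω
    exact congrArg₂ (· * ·) (congrFun (hψa u a') ω) (congrFun (hψa u b') ω)
  -- L² and integrability facts about K
  have hKMem : ∀ i, MemLp (fun ω => (K ω i : ℝ)) 2 ℙ := by
    intro i
    have h : (fun ω => (K ω i : ℝ)) = fun ω => (z i : ℝ) + (M ω i : ℝ) :=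
      funext fun ω => hKcast ω i
    rw [h]
    exact (memLp_const (z i : ℝ)).add (hMsq i)
  have hKint : ∀ i, Integrable (fun ω => (K ω i : ℝ)) ℙ :=
    fun i => (hKMem i).integrable one_le_two
  have hKKint : ∀ i i', Integrable (fun ω => (K ω i : ℝ) * (K ω i' : ℝ)) ℙ :=
    fun i i' => l2_mul_int (hKMem i) (hKMem i')
  have hKmul : ∀ (i : Fin p) (c : ℝ), MemLp (fun ω => (K ω i : ℝ) * c) 2 ℙ := by
    intro i c
    have h : (fun ω => (K ω i : ℝ) * c) = fun ω => c * (K ω i : ℝ) := by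
      funext ω; ring
    rw [h]
    exact (hKMem i).const_mul c
  have hKsumMem : ∀ (c' : Fin p), MemLp (fun ω => ∑ i, (K ω i : ℝ) * m i c') 2 ℙ := by
    intro c'
    have h : (fun ω => ∑ i, (K ω i : ℝ) * m i c')
        = ∑ i : Fin p, fun ω => (K ω i : ℝ) * m i c' := by
      funext ω; simp
    rw [h]
    exact memLp_finset_sum' _ fun i _ => hKmul i (m i c')
  -- measurability of the components of S
  have hSmeas : ∀ a', Measurable (fun ω => (S ω a' : ℝ)) := by
    intro a'
    have h2 : Measurable (fun x : Ω × (Fin p → ℕ) => T x.2 a' x.1) :=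
      measurable_from_prod_countable_left fun u => hTmeas u a'
    have h : (fun ω => (S ω a' : ℝ))
        = (fun x : Ω × (Fin p → ℕ) => T x.2 a' x.1) ∘ (fun ω => (ω, K ω)) :=
      funext fun ω => hST ω a'
    rw [h]
    exact h2.comp (measurable_id.prodMk hKmeas)
  -- first application of the transfer lemma : expectation of S
  have happ1 : ∀ a', Integrable (fun ω => (S ω a' : ℝ)) ℙ ∧
      ∫ ω, (S ω a' : ℝ) = ∫ ω, ∑ i, (K ω i : ℝ) * m i a' := by
    intro a'
    exact transfer K hKmeas _ (fun ω => Nat.cast_nonneg _) (hSmeas a').aestronglyMeasurable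
      (fun u => T u a') (fun u ω => hT0 u a' ω)
      (fun u ω h => by rw [hST ω a', h])
      (fun u => hTint u a') (fun u => hind1 u a')
      (fun u => ∑ i, (u i : ℝ) * m i a') (fun u => hET u a')
      (integrable_finset_sum _ fun i _ => (hKint i).mul_const _)
  -- second application : expectation of (S a) * (S b)
  have happ2 : Integrable (fun ω => (S ω a : ℝ) * (S ω b : ℝ)) ℙ ∧
      ∫ ω, (S ω a : ℝ) * (S ω b : ℝ)
        = ∫ ω, (∑ i, (K ω i : ℝ) * Sx i a b)
            + (∑ i, (K ω i : ℝ) * m i a) * (∑ i, (K ω i : ℝ) * m i b) := by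
    refine transfer K hKmeas _
      (fun ω => mul_nonneg (Nat.cast_nonneg _) (Nat.cast_nonneg _))
      ((hSmeas a).mul (hSmeas b)).aestronglyMeasurable
      (fun u ω => T u a ω * T u b ω)
      (fun u ω => mul_nonneg (hT0 u a ω) (hT0 u b ω))
      (fun u ω h => by rw [hST ω a, hST ω b, h])
      (fun u => hTTint u a b) (fun u => hind2 u a b)
      (fun u => (∑ i, (u i : ℝ) * Sx i a b)
        + (∑ i, (u i : ℝ) * m i a) * (∑ i, (u i : ℝ) * m i b))
      (fun u => hETT u a b) ?_
    exact (integrable_finset_sum _ fun i _ => (hKint i).mul_const _).add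
      (l2_mul_int (hKsumMem a) (hKsumMem b))
  -- expectations involving K and M
  have hEKi : ∀ i, ∫ ω, (K ω i : ℝ) = (z i : ℝ) + ∫ ω, (M ω i : ℝ) := by
    intro i
    have h : (fun ω => (K ω i : ℝ)) = fun ω => (z i : ℝ) + (M ω i : ℝ) :=
      funext fun ω => hKcast ω i
    rw [h, integral_add (integrable_const _) (hMint i), integral_const]
    simp
  have hMMint : ∀ i i', Integrable (fun ω => (M ω i : ℝ) * (M ω i' : ℝ)) ℙ :=
    fun i i' => l2_mul_int (hMsq i) (hMsq i')
  have hCMval : ∀ i i', CM i i'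
      = (∫ ω, (M ω i : ℝ) * (M ω i' : ℝ)) - (∫ ω, (M ω i : ℝ)) * ∫ ω, (M ω i' : ℝ) := by
    intro i i'
    rw [hCM i i', cov_expand (hMint i) (hMint i') (hMMint i i') _ _]
    ring
  have hEKK : ∀ i i', ∫ ω, (K ω i : ℝ) * (K ω i' : ℝ)
      = ((z i : ℝ) + ∫ ω, (M ω i : ℝ)) * ((z i' : ℝ) + ∫ ω, (M ω i' : ℝ)) + CM i i' := by
    intro i i'
    have e : (fun ω => (K ω i : ℝ) * (K ω i' : ℝ))
        = fun ω => ((M ω i : ℝ) * (M ω i' : ℝ) + ((z i : ℝ) * M ω i' + (z i' : ℝ) * M ω i))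
            + (z i : ℝ) * (z i' : ℝ) := by
      funext ω; rw [hKcast ω i, hKcast ω i']; ring
    have i1 : Integrable (fun ω => (z i : ℝ) * M ω i' + (z i' : ℝ) * M ω i) ℙ :=
      ((hMint i').const_mul _).add ((hMint i).const_mul _)
    have i2 : Integrable (fun ω => (M ω i : ℝ) * M ω i'
        + ((z i : ℝ) * M ω i' + (z i' : ℝ) * M ω i)) ℙ := (hMMint i i').add i1
    rw [e, integral_add i2 (integrable_const _),
        integral_add (hMMint i i') i1,
        integral_add ((hMint i').const_mul _) ((hMint i).const_mul _),
        integral_const_mul, integral_const_mul, integral_const, hCMval i i']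
    simp only [measure_univ, ENNReal.toReal_one, smul_eq_mul, one_mul, probReal_univ, mul_one]
    ring
  have hESa' : ∀ c', ∫ ω, (S ω c' : ℝ)
      = ∑ i, ((z i : ℝ) + ∫ ω, (M ω i : ℝ)) * m i c' := by
    intro c'
    rw [(happ1 c').2, integral_finset_sum _ fun i _ => (hKint i).mul_const _]
    exact Finset.sum_congr rfl fun i _ => by rw [integral_mul_const, hEKi i]
  have hKKm : ∀ i i' (c d : ℝ),
      Integrable (fun ω => ((K ω i : ℝ) * c) * ((K ω i' : ℝ) * d)) ℙ := by
    intro i i' c d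
    have h : (fun ω => ((K ω i : ℝ) * c) * ((K ω i' : ℝ) * d))
        = fun ω => (c * d) * ((K ω i : ℝ) * (K ω i' : ℝ)) := funext fun ω => by ring
    rw [h]; exact (hKKint i i').const_mul _
  have hEKKm : ∀ i i' (c d : ℝ),
      ∫ ω, ((K ω i : ℝ) * c) * ((K ω i' : ℝ) * d)
        = c * d * ∫ ω, (K ω i : ℝ) * (K ω i' : ℝ) := by
    intro i i' c d
    have h : (fun ω => ((K ω i : ℝ) * c) * ((K ω i' : ℝ) * d))
        = fun ω => (c * d) * ((K ω i : ℝ) * (K ω i' : ℝ)) := funext fun ω => by ring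
    rw [h, integral_const_mul]
  have hESS' : ∫ ω, (S ω a : ℝ) * (S ω b : ℝ)
      = (∑ i, ((z i : ℝ) + ∫ ω, (M ω i : ℝ)) * Sx i a b)
        + ∑ i, ∑ i', m i a * m i' b * ∫ ω, (K ω i : ℝ) * (K ω i' : ℝ) := by
    rw [happ2.2]
    have hint1 : Integrable (fun ω => ∑ i, (K ω i : ℝ) * Sx i a b) ℙ :=
      integrable_finset_sum _ fun i _ => (hKint i).mul_const _
    have hprodeq : (fun ω => (∑ i, (K ω i : ℝ) * m i a) * (∑ i, (K ω i : ℝ) * m i b))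
        = fun ω => ∑ i, ∑ i', ((K ω i : ℝ) * m i a) * ((K ω i' : ℝ) * m i' b) :=
      funext fun ω => Finset.sum_mul_sum _ _ _ _
    have hint2 : Integrable
        (fun ω => (∑ i, (K ω i : ℝ) * m i a) * (∑ i, (K ω i : ℝ) * m i b)) ℙ :=
      l2_mul_int (hKsumMem a) (hKsumMem b)
    rw [integral_add hint1 hint2]
    congr 1
    · rw [integral_finset_sum _ fun i _ => (hKint i).mul_const _]
      exact Finset.sum_congr rfl fun i _ => by rw [integral_mul_const, hEKi i]
    · rw [hprodeq, integral_finset_sum _ fun i _ =>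
        integrable_finset_sum _ fun i' _ => hKKm i i' _ _]
      refine Finset.sum_congr rfl fun i _ => ?_
      rw [integral_finset_sum _ fun i' _ => hKKm i i' _ _]
      exact Finset.sum_congr rfl fun i' _ => hEKKm i i' _ _
  -- final computation
  rw [cov_expand (happ1 a).1 (happ1 b).1 happ2.1 (∫ ω', (S ω' a : ℝ)) (∫ ω', (S ω' b : ℝ)),
      hESS', hESa' a, hESa' b]
  have h1 : ∀ (i i' : Fin p), m i a * m i' b * ∫ ω, (K ω i : ℝ) * (K ω i' : ℝ)
      = (((z i : ℝ) + ∫ ω, (M ω i : ℝ)) * m i a)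
          * ((((z i' : ℝ) + ∫ ω, (M ω i' : ℝ))) * m i' b)
        + m i a * CM i i' * m i' b := by
    intro i i'
    rw [hEKK i i']
    ring
  have h2 : ∑ i, ∑ i', m i a * m i' b * ∫ ω, (K ω i : ℝ) * (K ω i' : ℝ)
      = (∑ i, ∑ i', (((z i : ℝ) + ∫ ω, (M ω i : ℝ)) * m i a)
          * ((((z i' : ℝ) + ∫ ω, (M ω i' : ℝ))) * m i' b))
        + ∑ i, ∑ i', m i a * CM i i' * m i' b := by
    rw [← Finset.sum_add_distrib]
    refine Finset.sum_congr rfl fun i _ => ?_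
    rw [← Finset.sum_add_distrib]
    exact Finset.sum_congr rfl fun i' _ => h1 i i'
  have h3 : (∑ i, ((z i : ℝ) + ∫ ω, (M ω i : ℝ)) * m i a)
        * (∑ i, ((z i : ℝ) + ∫ ω, (M ω i : ℝ)) * m i b)
      = ∑ i, ∑ i', (((z i : ℝ) + ∫ ω, (M ω i : ℝ)) * m i a)
          * ((((z i' : ℝ) + ∫ ω, (M ω i' : ℝ))) * m i' b) :=
    Finset.sum_mul_sum _ _ _ _
  rw [h2, ← h3]
  ring
end

section
/- Theorem 1(a): Let (Z_k)_{k∈ℤ₊} be an MBPM satisfying Hypotheses A and B. Suppose that for each i ∈ {1,…,p} there exists N such that h_i(z) ≤ 0 for all z ∈ ℤ₊^p with ‖z‖ ≥ N. Then P(‖Z_n‖ → ∞ as n → ∞) = 0. -/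
open MeasureTheory ProbabilityTheory Filter Asymptotics

open scoped ENNReal

section Helpers

variable {Ω β γ : Type*}

lemma mbpm_aux_measurable_cases {mΩ : MeasurableSpace Ω} [MeasurableSpace γ]
    [Countable β] [MeasurableSpace β] [MeasurableSingletonClass β]
    {g : Ω → β} (hg : Measurable g) {f : β → Ω → γ} (hf : ∀ b, Measurable (f b)) :
    Measurable fun ω => f (g ω) ω := by
  intro s hs
  have : (fun ω => f (g ω) ω) ⁻¹' s = ⋃ b, (g ⁻¹' {b}) ∩ ((f b) ⁻¹' s) := by
    ext ω
    simp only [Set.mem_preimage, Set.mem_iUnion, Set.mem_inter_iff, Set.mem_singleton_iff]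
    constructor
    · intro hω; exact ⟨g ω, rfl, hω⟩
    · rintro ⟨b, hb, hω⟩; rwa [hb]
  rw [this]
  exact MeasurableSet.iUnion fun b => (hg (measurableSet_singleton b)).inter (hf b hs)

lemma mbpm_aux_lintegral_partition {mΩ : MeasurableSpace Ω} (μ : Measure Ω)
    [Countable β] [MeasurableSpace β] [MeasurableSingletonClass β]
    {g : Ω → β} (hg : Measurable g) (f : Ω → ℝ≥0∞) {A : Set Ω} (hA : MeasurableSet A) :
    ∫⁻ ω in A, f ω ∂μ = ∑' b, ∫⁻ ω in A ∩ g ⁻¹' {b}, f ω ∂μ := by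
  have hU : A = ⋃ b, A ∩ g ⁻¹' {b} := by ext ω; simp
  conv_lhs => rw [hU]
  exact lintegral_iUnion (fun b => hA.inter (hg (measurableSet_singleton b)))
    (fun b b' hbb' => by
      simp only [Function.onFun, Set.disjoint_left]
      rintro ω ⟨-, h1⟩ ⟨-, h2⟩
      exact hbb' ((Set.mem_singleton_iff.1 h1).symm.trans (Set.mem_singleton_iff.1 h2))) f

end Helpers

/-- Index sets for the natural filtration: `X`-indices below `kX`, `M`-indices below `kM`. -/
def mbpmS (p kX kM : ℕ) : Set (Unit ⊕ (ℕ × ℕ × Fin p) ⊕ (ℕ × (Fin p → ℕ))) :=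
  {x | Sum.elim (fun _ => True) (Sum.elim (fun y => y.1 < kX) (fun y => y.1 < kM)) x}

/-- Theorem 1(a): a critical MBPM (Hypotheses A and B) in which, for each type `i`, the mean
migration `h i` is nonpositive for all sufficiently large populations, has no unlimited
growth: `P(‖Z_n‖ → ∞) = 0`. -/
theorem mbpm_no_unlimited_growth_of_eventually_nonpositive_migration_mean
    {Ω : Type*} [MeasureSpace Ω] [IsProbabilityMeasure (ℙ : Measure Ω)]
    (p : ℕ) (hp : 0 < p)
    -- the process, the offspring variables and the migration variables
    (Z : ℕ → Ω → Fin p → ℕ)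
    (X : ℕ → ℕ → Fin p → Ω → Fin p → ℕ)
    (M : ℕ → (Fin p → ℕ) → Ω → Fin p → ℤ)
    (hZ0meas : Measurable (Z 0)) (hXmeas : ∀ k j i, Measurable (X k j i))
    (hMmeas : ∀ k z, Measurable (M k z))
    -- migration stays above `-z`
    (hMz : ∀ k z ω i, -(z i : ℤ) ≤ M k z ω i)
    -- identical distributions
    (hXid : ∀ k j i, Measure.map (X k j i) ℙ = Measure.map (X 0 0 i) ℙ)
    (hMid : ∀ k z, Measure.map (M k z) ℙ = Measure.map (M 0 z) ℙ)
    -- integrability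
    (hXint : ∀ i a, Integrable (fun ω => (X 0 0 i ω a : ℝ)))
    (hMint : ∀ z i, Integrable (fun ω => (M 0 z ω i : ℝ)))
    -- mutual independence of `Z 0`, the `X k j i` and the `M k z`
    (hindep : iIndepFun (β := fun _ : Unit ⊕ (ℕ × ℕ × Fin p) ⊕ (ℕ × (Fin p → ℕ)) => Fin p → ℤ)
      (Sum.elim (fun _ ω a => ((Z 0 ω a : ℤ)))
      (Sum.elim (fun kji ω a => ((X kji.1 kji.2.1 kji.2.2 ω a : ℤ)))
          (fun kz => M kz.1 kz.2))) ℙ)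
    -- the branching recursion defining the MBPM
    (hrec : ∀ k ω a, Z (k + 1) ω a =
      ∑ i, ∑ j ∈ Finset.range (((Z k ω i : ℤ) + M k (Z k ω) ω i).toNat), X k j i ω a)
    -- offspring mean matrix (columns `m i`) and mean migration `h`
    (m : Fin p → Fin p → ℝ) (hm : ∀ i a, m i a = ∫ ω, (X 0 0 i ω a : ℝ))
    (h : (Fin p → ℕ) → Fin p → ℝ) (hh : ∀ z i, h z i = ∫ ω, (M 0 z ω i : ℝ))
    -- Hypothesis A: `m` is primitive with Perron–Frobenius eigenvalue 1; `u` is the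
    -- strictly positive normalized left eigenvector
    (hprimitive : ∃ n : ℕ, 0 < n ∧ ∀ a b, 0 < ((Matrix.of fun a i => m i a) ^ n) a b)
    (u : Fin p → ℝ) (hu : ∀ i, 0 < u i) (husum : ∑ i, u i = 1)
    (hum : ∀ i, ∑ a, u a * m i a = u i)
    -- Hypothesis B: `h i z = o(‖z‖)` as `‖z‖ → ∞`
    (hB : ∀ i, (fun z : Fin p → ℕ => h z i)
      =o[cofinite] (fun z : Fin p → ℕ => ‖(fun a => (z a : ℝ))‖))
    -- condition (a): for each `i`, `h i z ≤ 0` for all `z` with `‖z‖` large enough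
    (hneg : ∀ i, ∃ N : ℝ, ∀ z : Fin p → ℕ, N ≤ ‖(fun a => (z a : ℝ))‖ → h z i ≤ 0) :
    ℙ {ω | Tendsto (fun n => ‖(fun a => (Z n ω a : ℝ))‖) atTop atTop} = 0 := by
  classical
  -- ambient measurable space
  let mΩ : MeasurableSpace Ω := inferInstance
  -- the joint family of random elements
  set F : (Unit ⊕ (ℕ × ℕ × Fin p) ⊕ (ℕ × (Fin p → ℕ))) → Ω → Fin p → ℤ :=
    Sum.elim (fun _ ω a => ((Z 0 ω a : ℤ)))
      (Sum.elim (fun kji ω a => ((X kji.1 kji.2.1 kji.2.2 ω a : ℤ)))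
        (fun kz => M kz.1 kz.2)) with hF
  have hFmeas : ∀ idx, Measurable (F idx) := by
    rintro (u | kji | kz)
    · exact measurable_pi_lambda _ fun a =>
        (measurable_of_countable _).comp ((measurable_pi_apply a).comp hZ0meas)
    · exact measurable_pi_lambda _ fun a =>
        (measurable_of_countable _).comp ((measurable_pi_apply a).comp (hXmeas _ _ _))
    · exact hMmeas _ _
  -- filtration-like σ-algebras
  let G : ℕ → MeasurableSpace Ω := fun k =>
    ⨆ idx ∈ mbpmS p k k, MeasurableSpace.comap (F idx) inferInstance
  let G' : ℕ → MeasurableSpace Ω := fun k =>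
    ⨆ idx ∈ mbpmS p k (k+1), MeasurableSpace.comap (F idx) inferInstance
  have hcomap_le : ∀ idx, MeasurableSpace.comap (F idx) inferInstance ≤ mΩ :=
    fun idx => (hFmeas idx).comap_le
  have hGle : ∀ k, G k ≤ mΩ := fun k => iSup₂_le fun idx _ => hcomap_le idx
  have hG'le : ∀ k, G' k ≤ mΩ := fun k => iSup₂_le fun idx _ => hcomap_le idx
  have hSmono : ∀ {k k' kM kM'}, k ≤ k' → kM ≤ kM' → mbpmS p k kM ⊆ mbpmS p k' kM' := by
    rintro k k' kM kM' h1 h2 (u | kji | kz) hx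
    · exact trivial
    · exact lt_of_lt_of_le hx h1
    · exact lt_of_lt_of_le hx h2
  have hGmono : ∀ {k k'}, k ≤ k' → G k ≤ G k' := fun {k k'} hk =>
    biSup_mono (hSmono hk hk)
  have hGG' : ∀ k, G k ≤ G' k := fun k => biSup_mono (hSmono le_rfl (Nat.le_succ k))
  have hG'G : ∀ k, G' k ≤ G (k+1) := fun k => biSup_mono (hSmono (Nat.le_succ k) le_rfl)
  have hmemS : ∀ {k kM idx}, idx ∈ mbpmS p k kM →
      MeasurableSpace.comap (F idx) inferInstance ≤
        ⨆ idx ∈ mbpmS p k kM, MeasurableSpace.comap (F idx) inferInstance := by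
    intro k kM idx hidx
    exact le_biSup (f := fun idx => MeasurableSpace.comap (F idx) inferInstance) hidx
  -- the random offspring counts
  let κ : ℕ → Ω → Fin p → ℕ := fun k ω i => ((Z k ω i : ℤ) + M k (Z k ω) ω i).toNat
  -- measurability of the process w.r.t. the filtration
  have hFmemG : ∀ (kX kM : ℕ) (idx) (_ : idx ∈ mbpmS p kX kM),
      Measurable[⨆ idx ∈ mbpmS p kX kM, MeasurableSpace.comap (F idx) inferInstance]
        (F idx) := fun kX kM idx hidx =>
    (Measurable.of_comap_le le_rfl).mono (hmemS hidx) le_rfl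
  have hXmemG : ∀ (kX kM k j i a : _) (_ : k < kX),
      Measurable[⨆ idx ∈ mbpmS p kX kM, MeasurableSpace.comap (F idx) inferInstance]
        (fun ω => X k j i ω a) := by
    intro kX kM k j i a hk
    have heq : (fun ω => X k j i ω a) =
        (fun v : Fin p → ℤ => (v a).toNat) ∘ F (.inr (.inl (k, j, i))) := by
      funext ω; simp [F]
    rw [heq]
    exact (measurable_of_countable _).comp (hFmemG kX kM _ hk)
  have hMmemG : ∀ (kX kM k : ℕ) (z : Fin p → ℕ) (_ : k < kM),
      Measurable[⨆ idx ∈ mbpmS p kX kM, MeasurableSpace.comap (F idx) inferInstance]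
        (M k z) := fun kX kM k z hk => hFmemG kX kM (.inr (.inr (k, z))) hk
  have hZG : ∀ k, Measurable[G k] (Z k) := by
    intro k
    induction k with
    | zero =>
      have heq : Z 0 = (fun v : Fin p → ℤ => fun a => (v a).toNat) ∘ F (.inl ()) := by
        funext ω a; simp [F]
      rw [heq]
      exact (measurable_of_countable _).comp (hFmemG 0 0 (.inl ()) trivial)
    | succ k ih =>
      letI : MeasurableSpace Ω := G (k+1)
      have hZk : Measurable[G (k+1)] (Z k) := ih.mono (hGmono (Nat.le_succ k)) le_rfl
      have hMco : Measurable[G (k+1)] (fun ω => M k (Z k ω) ω) :=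
        mbpm_aux_measurable_cases hZk (fun z => hMmemG (k+1) (k+1) k z (Nat.lt_succ_self k))
      have hκk : Measurable[G (k+1)] (κ k) := by
        refine measurable_pi_lambda _ fun i => ?_
        have h1 : Measurable[G (k+1)] (fun ω => ((Z k ω i : ℤ))) :=
          (measurable_of_countable _).comp ((measurable_pi_apply i).comp hZk)
        have h2 : Measurable[G (k+1)] (fun ω => M k (Z k ω) ω i) :=
          (measurable_pi_apply i).comp hMco
        exact (measurable_of_countable (fun t : ℤ => t.toNat)).comp (h1.add h2)
      have heq : Z (k+1) = fun ω =>
          (fun (c : Fin p → ℕ) (ω' : Ω) (a : Fin p) =>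
            ∑ i, ∑ j ∈ Finset.range (c i), X k j i ω' a) (κ k ω) ω := by
        funext ω a
        exact hrec k ω a
      rw [heq]
      refine mbpm_aux_measurable_cases (f := fun (c : Fin p → ℕ) (ω' : Ω) (a : Fin p) =>
        ∑ i, ∑ j ∈ Finset.range (c i), X k j i ω' a) hκk (fun c => ?_)
      refine measurable_pi_lambda _ fun a => ?_
      refine Finset.measurable_sum _ fun i _ => ?_
      exact Finset.measurable_sum _ fun j _ =>
        hXmemG (k+1) (k+1) k j i a (Nat.lt_succ_self k)
  have hκG' : ∀ k, Measurable[G' k] (κ k) := by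
    intro k
    letI : MeasurableSpace Ω := G' k
    have hZk : Measurable[G' k] (Z k) := (hZG k).mono (hGG' k) le_rfl
    have hMco : Measurable[G' k] (fun ω => M k (Z k ω) ω) :=
      mbpm_aux_measurable_cases hZk (fun z => hMmemG k (k+1) k z (Nat.lt_succ_self k))
    refine measurable_pi_lambda _ fun i => ?_
    have h1 : Measurable[G' k] (fun ω => ((Z k ω i : ℤ))) :=
      (measurable_of_countable _).comp ((measurable_pi_apply i).comp hZk)
    have h2 : Measurable[G' k] (fun ω => M k (Z k ω) ω i) :=
      (measurable_pi_apply i).comp hMco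
    exact (measurable_of_countable (fun t : ℤ => t.toNat)).comp (h1.add h2)
  have hZmeas : ∀ k, Measurable (Z k) := fun k => (hZG k).mono (hGle k) le_rfl
  have hκmeas : ∀ k, Measurable (κ k) := fun k => (hκG' k).mono (hG'le k) le_rfl
  -- independence of the fresh randomness from the past
  have hiI : iIndep (fun idx => MeasurableSpace.comap (F idx) inferInstance) ℙ :=
    hindep.iIndep
  have hindep_one : ∀ (idx) (kX kM : ℕ), idx ∉ mbpmS p kX kM →
      Indep (MeasurableSpace.comap (F idx) inferInstance)
        (⨆ i ∈ mbpmS p kX kM, MeasurableSpace.comap (F i) inferInstance) ℙ := by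
    intro idx kX kM hidx
    have h2 := indep_iSup_of_disjoint hcomap_le hiI
      (S := {idx}) (T := mbpmS p kX kM) (Set.disjoint_singleton_left.mpr hidx)
    refine indep_of_indep_of_le_left h2 ?_
    simp [iSup_singleton]
  have hindepM : ∀ k z,
      Indep (MeasurableSpace.comap (M k z) inferInstance) (G k) ℙ := by
    intro k z
    exact hindep_one (.inr (.inr (k, z))) k k (by simp [mbpmS])
  have hindepX : ∀ k j i,
      Indep (MeasurableSpace.comap (fun ω a => ((X k j i ω a : ℤ))) inferInstance)
        (G' k) ℙ := by
    intro k j i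
    exact hindep_one (.inr (.inl (k, j, i))) k (k+1) (by simp [mbpmS])
  -- means
  have hm_nonneg : ∀ i a, 0 ≤ m i a := by
    intro i a
    rw [hm]
    exact integral_nonneg fun ω => Nat.cast_nonneg _
  have hMptw_nonneg : ∀ k (z : Fin p → ℕ) ω i, (0:ℝ) ≤ (z i : ℝ) + (M k z ω i : ℝ) := by
    intro k z ω i
    have h1 := hMz k z ω i
    have h2 : -((z i : ℕ) : ℝ) ≤ ((M k z ω i : ℤ) : ℝ) := by exact_mod_cast h1
    linarith
  have hint_eq : ∀ (z : Fin p → ℕ) i,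
      ∫ ω, ((z i : ℝ) + (M 0 z ω i : ℝ)) ∂ℙ = (z i : ℝ) + h z i := by
    intro z i
    rw [integral_add (integrable_const _) (hMint z i), integral_const, probReal_univ,
      one_smul, hh]
  have hzh_nonneg : ∀ (z : Fin p → ℕ) i, 0 ≤ (z i : ℝ) + h z i := by
    intro z i
    rw [← hint_eq z i]
    exact integral_nonneg fun ω => hMptw_nonneg 0 z ω i
  have hXmean : ∀ k j i a, ∫⁻ ω, ((X k j i ω a : ℕ) : ℝ≥0∞) ∂ℙ = ENNReal.ofReal (m i a) := by
    intro k j i a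
    have hcast : ∀ (W : Ω → Fin p → ℕ), Measurable W →
        ∫⁻ ω, ((W ω a : ℕ) : ℝ≥0∞) ∂ℙ =
          ∫⁻ v, ((v a : ℕ) : ℝ≥0∞) ∂(Measure.map W ℙ) := fun W hW =>
      (lintegral_map (f := fun v : Fin p → ℕ => ((v a : ℕ) : ℝ≥0∞))
        (measurable_of_countable _) hW).symm
    rw [hcast _ (hXmeas k j i), hXid k j i, ← hcast _ (hXmeas 0 0 i)]
    have h1 : ∀ ω, ((X 0 0 i ω a : ℕ) : ℝ≥0∞) = ENNReal.ofReal ((X 0 0 i ω a : ℕ) : ℝ) :=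
      fun ω => (ENNReal.ofReal_natCast _).symm
    rw [lintegral_congr h1,
      ← ofReal_integral_eq_lintegral_ofReal (hXint i a)
        (Eventually.of_forall fun ω => Nat.cast_nonneg _), hm]
  have hMmean : ∀ k (z : Fin p → ℕ) i,
      ∫⁻ ω, (((z i : ℤ) + M k z ω i).toNat : ℝ≥0∞) ∂ℙ =
        ENNReal.ofReal ((z i : ℝ) + h z i) := by
    intro k z i
    have hcast : ∀ (W : Ω → Fin p → ℤ), Measurable W →
        ∫⁻ ω, (((z i : ℤ) + W ω i).toNat : ℝ≥0∞) ∂ℙ =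
          ∫⁻ v, (((z i : ℤ) + v i).toNat : ℝ≥0∞) ∂(Measure.map W ℙ) := fun W hW =>
      (lintegral_map (f := fun v : Fin p → ℤ => (((z i : ℤ) + v i).toNat : ℝ≥0∞))
        (measurable_of_countable _) hW).symm
    rw [hcast _ (hMmeas k z), hMid k z, ← hcast _ (hMmeas 0 z)]
    have h1 : ∀ ω, (((z i : ℤ) + M 0 z ω i).toNat : ℝ≥0∞) =
        ENNReal.ofReal ((z i : ℝ) + (M 0 z ω i : ℝ)) := by
      intro ω
      have hnn : (0:ℤ) ≤ (z i : ℤ) + M 0 z ω i := by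
        have := hMz 0 z ω i; omega
      rw [← ENNReal.ofReal_natCast]
      congr 1
      have h2 : ((((z i : ℤ) + M 0 z ω i).toNat : ℤ)) = (z i : ℤ) + M 0 z ω i :=
        Int.toNat_of_nonneg hnn
      exact_mod_cast congrArg (Int.cast : ℤ → ℝ) h2
    rw [lintegral_congr h1,
      ← ofReal_integral_eq_lintegral_ofReal
        (show Integrable (fun ω => ((z i : ℕ) : ℝ) + (M 0 z ω i : ℝ)) ℙ from
          (integrable_const _).add (hMint z i))
        (Eventually.of_forall fun ω => hMptw_nonneg 0 z ω i), hint_eq]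
  -- the Lyapunov function
  let Yv : (Fin p → ℕ) → ℝ≥0∞ := fun z => ∑ i, ENNReal.ofReal (u i) * (z i : ℝ≥0∞)
  let Y : ℕ → Ω → ℝ≥0∞ := fun k ω => Yv (Z k ω)
  let gp : (Fin p → ℕ) → ℝ≥0∞ := fun z => ENNReal.ofReal (∑ i, u i * h z i)
  have hYmeas : ∀ k, Measurable (Y k) :=
    fun k => (measurable_of_countable Yv).comp (hZmeas k)
  have hYGmeas : ∀ k, Measurable[G k] (Y k) :=
    fun k => (measurable_of_countable Yv).comp (hZG k)
  -- THE KEY DRIFT INEQUALITY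
  have KEY : ∀ k (A : Set Ω), MeasurableSet[G k] A →
      ∫⁻ ω in A, Y (k+1) ω ∂ℙ ≤ ∫⁻ ω in A, (Y k ω + gp (Z k ω)) ∂ℙ := by
    intro k A hA
    have hAm : MeasurableSet A := hGle k _ hA
    have hAG' : MeasurableSet[G' k] A := hGG' k _ hA
    have hκset : ∀ (j : ℕ) (i : Fin p), MeasurableSet[G' k] {ω | j < κ k ω i} :=
      fun j i => hκG' k (MeasurableSet.of_discrete (s := {c : Fin p → ℕ | j < c i}))
    have hκsetm : ∀ (j : ℕ) (i : Fin p), MeasurableSet {ω | j < κ k ω i} :=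
      fun j i => hG'le k _ (hκset j i)
    have hXcm : ∀ (j : ℕ) (i a : Fin p), Measurable fun ω => ((X k j i ω a : ℕ) : ℝ≥0∞) :=
      fun j i a =>
        (measurable_of_countable _).comp ((measurable_pi_apply a).comp (hXmeas k j i))
    -- Step A: factorization of the offspring contribution via independence
    have hXfac : ∀ (j : ℕ) (i a : Fin p),
        ∫⁻ ω in A ∩ {ω' | j < κ k ω' i}, ((X k j i ω a : ℕ) : ℝ≥0∞) ∂ℙ =
          ENNReal.ofReal (m i a) * ℙ (A ∩ {ω' | j < κ k ω' i}) := by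
      intro j i a
      have hEG' : MeasurableSet[G' k] (A ∩ {ω' | j < κ k ω' i}) := hAG'.inter (hκset j i)
      have hEm : MeasurableSet (A ∩ {ω' | j < κ k ω' i}) := hG'le k _ hEG'
      have h1 : ∫⁻ ω in A ∩ {ω' | j < κ k ω' i}, ((X k j i ω a : ℕ) : ℝ≥0∞) ∂ℙ =
          ∫⁻ ω, (fun ω' => ((X k j i ω' a : ℕ) : ℝ≥0∞)) ω *
            (A ∩ {ω' | j < κ k ω' i}).indicator 1 ω ∂ℙ := by
        rw [← lintegral_indicator hEm]
        refine lintegral_congr fun ω => ?_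
        by_cases hω : ω ∈ A ∩ {ω' | j < κ k ω' i} <;> simp [hω]
      have hf : Measurable[MeasurableSpace.comap (fun ω a => ((X k j i ω a : ℤ))) inferInstance]
          fun ω => ((X k j i ω a : ℕ) : ℝ≥0∞) := by
        have heq : (fun ω => ((X k j i ω a : ℕ) : ℝ≥0∞)) =
            (fun v : Fin p → ℤ => ((v a).toNat : ℝ≥0∞)) ∘ (fun ω a => ((X k j i ω a : ℤ))) := by
          funext ω; simp
        rw [heq]
        exact (measurable_of_countable _).comp (Measurable.of_comap_le le_rfl)
      have hg : Measurable[G' k] ((A ∩ {ω' | j < κ k ω' i}).indicator (1 : Ω → ℝ≥0∞)) :=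
        measurable_const.indicator hEG'
      rw [h1, lintegral_mul_eq_lintegral_mul_lintegral_of_independent_measurableSpace
        (hcomap_le (.inr (.inl (k, j, i)))) (hG'le k) (hindepX k j i) hf hg, hXmean k j i a,
        lintegral_indicator_one hEm]
    -- Step B: the count integral
    have hκint : ∀ i, ∑' (j : ℕ), ℙ (A ∩ {ω' | j < κ k ω' i}) =
        ∫⁻ ω in A, (κ k ω i : ℝ≥0∞) ∂ℙ := by
      intro i
      have h1 : ∀ j : ℕ, ℙ (A ∩ {ω' | j < κ k ω' i}) =
          ∫⁻ ω in A, {ω' | j < κ k ω' i}.indicator 1 ω ∂ℙ := by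
        intro j
        rw [lintegral_indicator_one (hκsetm j i), Measure.restrict_apply (hκsetm j i),
          Set.inter_comm]
      calc ∑' (j : ℕ), ℙ (A ∩ {ω' | j < κ k ω' i})
          = ∑' (j : ℕ), ∫⁻ ω in A, {ω' | j < κ k ω' i}.indicator 1 ω ∂ℙ :=
            tsum_congr fun j => h1 j
        _ = ∫⁻ ω in A, ∑' (j : ℕ), {ω' | j < κ k ω' i}.indicator 1 ω ∂ℙ :=
            (lintegral_tsum fun j =>
              (measurable_const.indicator (hκsetm j i)).aemeasurable).symm
        _ = ∫⁻ ω in A, (κ k ω i : ℝ≥0∞) ∂ℙ := by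
            refine lintegral_congr fun ω => ?_
            rw [tsum_eq_sum (s := Finset.range (κ k ω i)) (fun j hj => by
              rw [Finset.mem_range, not_lt] at hj
              exact Set.indicator_of_notMem
                (show ω ∉ {ω' | j < κ k ω' i} from not_lt.mpr hj) (1 : Ω → ℝ≥0∞))]
            have hone : ∀ j ∈ Finset.range (κ k ω i),
                {ω' | j < κ k ω' i}.indicator (1 : Ω → ℝ≥0∞) ω = 1 := fun j hj =>
              Set.indicator_of_mem
                (show ω ∈ {ω' | j < κ k ω' i} from Finset.mem_range.mp hj) _
            rw [Finset.sum_congr rfl hone]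
            simp
    -- Step C: factorization of the migration contribution via independence
    have hZsetm : ∀ z : Fin p → ℕ, MeasurableSet[G k] (A ∩ Z k ⁻¹' {z}) :=
      fun z => hA.inter (hZG k (measurableSet_singleton z))
    have hMfac : ∀ (z : Fin p → ℕ) (i : Fin p),
        ∫⁻ ω in A ∩ Z k ⁻¹' {z}, (κ k ω i : ℝ≥0∞) ∂ℙ =
          ENNReal.ofReal ((z i : ℝ) + h z i) * ℙ (A ∩ Z k ⁻¹' {z}) := by
      intro z i
      have hEm : MeasurableSet (A ∩ Z k ⁻¹' {z}) := hGle k _ (hZsetm z)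
      have hcongr : ∫⁻ ω in A ∩ Z k ⁻¹' {z}, (κ k ω i : ℝ≥0∞) ∂ℙ =
          ∫⁻ ω in A ∩ Z k ⁻¹' {z}, (((z i : ℤ) + M k z ω i).toNat : ℝ≥0∞) ∂ℙ := by
        refine setLIntegral_congr_fun hEm (fun ω hω => ?_)
        have hz : Z k ω = z := hω.2
        simp only [κ, hz]
      have h1 : ∫⁻ ω in A ∩ Z k ⁻¹' {z}, (((z i : ℤ) + M k z ω i).toNat : ℝ≥0∞) ∂ℙ =
          ∫⁻ ω, (fun ω' => (((z i : ℤ) + M k z ω' i).toNat : ℝ≥0∞)) ω *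
            (A ∩ Z k ⁻¹' {z}).indicator 1 ω ∂ℙ := by
        rw [← lintegral_indicator hEm]
        refine lintegral_congr fun ω => ?_
        by_cases hω : ω ∈ A ∩ Z k ⁻¹' {z} <;> simp [hω]
      have hf : Measurable[MeasurableSpace.comap (M k z) inferInstance]
          fun ω => (((z i : ℤ) + M k z ω i).toNat : ℝ≥0∞) :=
        (measurable_of_countable (fun v : Fin p → ℤ => (((z i : ℤ) + v i).toNat : ℝ≥0∞))).comp
          (Measurable.of_comap_le le_rfl)
      have hg : Measurable[G k] ((A ∩ Z k ⁻¹' {z}).indicator (1 : Ω → ℝ≥0∞)) :=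
        measurable_const.indicator (hZsetm z)
      rw [hcongr, h1, lintegral_mul_eq_lintegral_mul_lintegral_of_independent_measurableSpace
        ((hMmeas k z).comap_le) (hGle k) (hindepM k z) hf hg, hMmean k z i,
        lintegral_indicator_one hEm]
    -- Step D: coordinatewise expansion
    have hYexp : ∫⁻ ω in A, Y (k+1) ω ∂ℙ =
        ∑ a, ENNReal.ofReal (u a) * ∫⁻ ω in A, ((Z (k+1) ω a : ℕ) : ℝ≥0∞) ∂ℙ := by
      have hpt : ∀ ω, Y (k+1) ω =
          ∑ a, ENNReal.ofReal (u a) * ((Z (k+1) ω a : ℕ) : ℝ≥0∞) := fun ω => rfl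
      calc ∫⁻ ω in A, Y (k+1) ω ∂ℙ
          = ∫⁻ ω in A, ∑ a, ENNReal.ofReal (u a) *
              ((Z (k+1) ω a : ℕ) : ℝ≥0∞) ∂ℙ := lintegral_congr hpt
        _ = ∑ a, ∫⁻ ω in A, ENNReal.ofReal (u a) *
              ((Z (k+1) ω a : ℕ) : ℝ≥0∞) ∂ℙ :=
            lintegral_finset_sum _ (fun a _ =>
              ((measurable_of_countable _).comp
                ((measurable_pi_apply a).comp (hZmeas (k+1)))).const_mul _)
        _ = ∑ a, ENNReal.ofReal (u a) * ∫⁻ ω in A, ((Z (k+1) ω a : ℕ) : ℝ≥0∞) ∂ℙ :=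
            Finset.sum_congr rfl fun a _ => lintegral_const_mul _
              ((measurable_of_countable _).comp
                ((measurable_pi_apply a).comp (hZmeas (k+1))))
    have hZsplit : ∀ a, ∫⁻ ω in A, ((Z (k+1) ω a : ℕ) : ℝ≥0∞) ∂ℙ =
        ∑ i, ENNReal.ofReal (m i a) * ∫⁻ ω in A, (κ k ω i : ℝ≥0∞) ∂ℙ := by
      intro a
      have hpt : ∀ ω, ((Z (k+1) ω a : ℕ) : ℝ≥0∞) =
          ∑ i, ∑' (j : ℕ), {ω' | j < κ k ω' i}.indicator
            (fun ω' => ((X k j i ω' a : ℕ) : ℝ≥0∞)) ω := by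
        intro ω
        rw [hrec k ω a]
        push_cast
        refine Finset.sum_congr rfl fun i _ => ?_
        symm
        rw [tsum_eq_sum (s := Finset.range (κ k ω i)) (fun j hj => by
          rw [Finset.mem_range, not_lt] at hj
          exact Set.indicator_of_notMem
            (show ω ∉ {ω' | j < κ k ω' i} from not_lt.mpr hj)
            (fun ω' => ((X k j i ω' a : ℕ) : ℝ≥0∞)))]
        refine Finset.sum_congr rfl fun j hj => ?_
        exact Set.indicator_of_mem
          (show ω ∈ {ω' | j < κ k ω' i} from Finset.mem_range.mp hj) _
      calc ∫⁻ ω in A, ((Z (k+1) ω a : ℕ) : ℝ≥0∞) ∂ℙ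
          = ∫⁻ ω in A, ∑ i, ∑' (j : ℕ), {ω' | j < κ k ω' i}.indicator
              (fun ω' => ((X k j i ω' a : ℕ) : ℝ≥0∞)) ω ∂ℙ := lintegral_congr hpt
        _ = ∑ i, ∫⁻ ω in A, ∑' (j : ℕ), {ω' | j < κ k ω' i}.indicator
              (fun ω' => ((X k j i ω' a : ℕ) : ℝ≥0∞)) ω ∂ℙ :=
            lintegral_finset_sum _ (fun i _ => Measurable.ennreal_tsum fun j =>
              (hXcm j i a).indicator (hκsetm j i))
        _ = ∑ i, ∑' (j : ℕ), ∫⁻ ω in A, {ω' | j < κ k ω' i}.indicator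
              (fun ω' => ((X k j i ω' a : ℕ) : ℝ≥0∞)) ω ∂ℙ :=
            Finset.sum_congr rfl fun i _ => lintegral_tsum fun j =>
              ((hXcm j i a).indicator (hκsetm j i)).aemeasurable
        _ = ∑ i, ∑' (j : ℕ), ∫⁻ ω in A ∩ {ω' | j < κ k ω' i},
              ((X k j i ω a : ℕ) : ℝ≥0∞) ∂ℙ := by
            refine Finset.sum_congr rfl fun i _ => tsum_congr fun j => ?_
            rw [lintegral_indicator (hκsetm j i), Measure.restrict_restrict (hκsetm j i),
              Set.inter_comm]
        _ = ∑ i, ∑' (j : ℕ), ENNReal.ofReal (m i a) * ℙ (A ∩ {ω' | j < κ k ω' i}) :=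
            Finset.sum_congr rfl fun i _ => tsum_congr fun j => hXfac j i a
        _ = ∑ i, ENNReal.ofReal (m i a) * ∑' (j : ℕ), ℙ (A ∩ {ω' | j < κ k ω' i}) :=
            Finset.sum_congr rfl fun i _ => ENNReal.tsum_mul_left
        _ = ∑ i, ENNReal.ofReal (m i a) * ∫⁻ ω in A, (κ k ω i : ℝ≥0∞) ∂ℙ := by
            refine Finset.sum_congr rfl fun i _ => ?_
            rw [hκint i]
    have hκpart : ∀ i, ∫⁻ ω in A, (κ k ω i : ℝ≥0∞) ∂ℙ =
        ∑' (z : Fin p → ℕ), ENNReal.ofReal ((z i : ℝ) + h z i) * ℙ (A ∩ Z k ⁻¹' {z}) := by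
      intro i
      rw [mbpm_aux_lintegral_partition ℙ (hZmeas k) _ hAm]
      exact tsum_congr fun z => hMfac z i
    have hRHS : ∫⁻ ω in A, (Y k ω + gp (Z k ω)) ∂ℙ =
        ∑' (z : Fin p → ℕ), (Yv z + gp z) * ℙ (A ∩ Z k ⁻¹' {z}) := by
      rw [mbpm_aux_lintegral_partition ℙ (hZmeas k) _ hAm]
      refine tsum_congr fun z => ?_
      have hc : ∀ ω, ω ∈ A ∩ Z k ⁻¹' {z} → Y k ω + gp (Z k ω) = Yv z + gp z := by
        intro ω hω
        have hz : Z k ω = z := hω.2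
        simp only [Y, hz]
      rw [setLIntegral_congr_fun (hGle k _ (hZsetm z)) hc,
        setLIntegral_const]
    have ht1 : ∀ i, ∑ a, ENNReal.ofReal (u a) * ENNReal.ofReal (m i a) =
        ENNReal.ofReal (u i) := by
      intro i
      calc ∑ a, ENNReal.ofReal (u a) * ENNReal.ofReal (m i a)
          = ∑ a, ENNReal.ofReal (u a * m i a) :=
            Finset.sum_congr rfl fun a _ => (ENNReal.ofReal_mul (hu a).le).symm
        _ = ENNReal.ofReal (∑ a, u a * m i a) :=
            (ENNReal.ofReal_sum_of_nonneg fun a _ =>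
              mul_nonneg (hu a).le (hm_nonneg i a)).symm
        _ = ENNReal.ofReal (u i) := by rw [hum i]
    have hzbd : ∀ z : Fin p → ℕ,
        ∑ i, ENNReal.ofReal (u i) * ENNReal.ofReal ((z i : ℝ) + h z i) ≤ Yv z + gp z := by
      intro z
      have h1 : ∑ i, ENNReal.ofReal (u i) * ENNReal.ofReal ((z i : ℝ) + h z i) =
          ENNReal.ofReal (∑ i, u i * ((z i : ℝ) + h z i)) := by
        rw [ENNReal.ofReal_sum_of_nonneg (fun i _ =>
          mul_nonneg (hu i).le (hzh_nonneg z i))]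
        exact Finset.sum_congr rfl fun i _ => (ENNReal.ofReal_mul (hu i).le).symm
      have h2 : ∑ i, u i * ((z i : ℝ) + h z i) =
          (∑ i, u i * (z i : ℝ)) + ∑ i, u i * h z i := by
        rw [← Finset.sum_add_distrib]
        exact Finset.sum_congr rfl fun i _ => mul_add _ _ _
      rw [h1, h2]
      refine le_trans ENNReal.ofReal_add_le (add_le_add ?_ le_rfl)
      rw [ENNReal.ofReal_sum_of_nonneg (fun i _ =>
        mul_nonneg (hu i).le (Nat.cast_nonneg _))]
      refine le_of_eq (Finset.sum_congr rfl fun i _ => ?_)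
      rw [ENNReal.ofReal_mul (hu i).le, ENNReal.ofReal_natCast]
    calc ∫⁻ ω in A, Y (k+1) ω ∂ℙ
        = ∑ a, ENNReal.ofReal (u a) * ∑ i, ENNReal.ofReal (m i a) *
            ∑' (z : Fin p → ℕ), ENNReal.ofReal ((z i : ℝ) + h z i) *
              ℙ (A ∩ Z k ⁻¹' {z}) := by
          rw [hYexp]
          refine Finset.sum_congr rfl fun a _ => ?_
          rw [hZsplit a]
          refine congrArg _ (Finset.sum_congr rfl fun i _ => ?_)
          rw [hκpart i]
      _ = ∑ i, ENNReal.ofReal (u i) * ∑' (z : Fin p → ℕ),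
            ENNReal.ofReal ((z i : ℝ) + h z i) * ℙ (A ∩ Z k ⁻¹' {z}) := by
          calc ∑ a, ENNReal.ofReal (u a) * ∑ i, ENNReal.ofReal (m i a) *
                  ∑' (z : Fin p → ℕ), ENNReal.ofReal ((z i : ℝ) + h z i) *
                    ℙ (A ∩ Z k ⁻¹' {z})
              = ∑ a, ∑ i, ENNReal.ofReal (u a) * (ENNReal.ofReal (m i a) *
                  ∑' (z : Fin p → ℕ), ENNReal.ofReal ((z i : ℝ) + h z i) *
                    ℙ (A ∩ Z k ⁻¹' {z})) := by
                exact Finset.sum_congr rfl fun a _ => Finset.mul_sum _ _ _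
            _ = ∑ i, ∑ a, ENNReal.ofReal (u a) * (ENNReal.ofReal (m i a) *
                  ∑' (z : Fin p → ℕ), ENNReal.ofReal ((z i : ℝ) + h z i) *
                    ℙ (A ∩ Z k ⁻¹' {z})) := Finset.sum_comm
            _ = ∑ i, (∑ a, ENNReal.ofReal (u a) * ENNReal.ofReal (m i a)) *
                  ∑' (z : Fin p → ℕ), ENNReal.ofReal ((z i : ℝ) + h z i) *
                    ℙ (A ∩ Z k ⁻¹' {z}) := by
                refine Finset.sum_congr rfl fun i _ => ?_
                rw [Finset.sum_mul]
                exact Finset.sum_congr rfl fun a _ => (mul_assoc _ _ _).symm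
            _ = ∑ i, ENNReal.ofReal (u i) * ∑' (z : Fin p → ℕ),
                  ENNReal.ofReal ((z i : ℝ) + h z i) * ℙ (A ∩ Z k ⁻¹' {z}) := by
                refine Finset.sum_congr rfl fun i _ => ?_
                rw [ht1 i]
      _ = ∑' (z : Fin p → ℕ), (∑ i, ENNReal.ofReal (u i) *
            ENNReal.ofReal ((z i : ℝ) + h z i)) * ℙ (A ∩ Z k ⁻¹' {z}) := by
          calc ∑ i, ENNReal.ofReal (u i) * ∑' (z : Fin p → ℕ),
                  ENNReal.ofReal ((z i : ℝ) + h z i) * ℙ (A ∩ Z k ⁻¹' {z})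
              = ∑ i, ∑' (z : Fin p → ℕ), ENNReal.ofReal (u i) *
                  (ENNReal.ofReal ((z i : ℝ) + h z i) * ℙ (A ∩ Z k ⁻¹' {z})) :=
                Finset.sum_congr rfl fun i _ => ENNReal.tsum_mul_left.symm
            _ = ∑' (z : Fin p → ℕ), ∑ i, ENNReal.ofReal (u i) *
                  (ENNReal.ofReal ((z i : ℝ) + h z i) * ℙ (A ∩ Z k ⁻¹' {z})) :=
                (Summable.tsum_finsetSum fun i _ => ENNReal.summable).symm
            _ = ∑' (z : Fin p → ℕ), (∑ i, ENNReal.ofReal (u i) *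
                  ENNReal.ofReal ((z i : ℝ) + h z i)) * ℙ (A ∩ Z k ⁻¹' {z}) := by
                refine tsum_congr fun z => ?_
                rw [Finset.sum_mul]
                exact Finset.sum_congr rfl fun i _ => (mul_assoc _ _ _).symm
      _ ≤ ∑' (z : Fin p → ℕ), (Yv z + gp z) * ℙ (A ∩ Z k ⁻¹' {z}) :=
          ENNReal.tsum_le_tsum fun z => mul_le_mul_left (hzbd z) _
      _ = ∫⁻ ω in A, (Y k ω + gp (Z k ω)) ∂ℙ := hRHS.symm
  -- choice of the threshold and the bound on the drift
  obtain ⟨Nr, hNr⟩ : ∃ Nr : ℝ, ∀ z : Fin p → ℕ,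
      Nr ≤ ‖(fun a => (z a : ℝ))‖ → gp z = 0 := by
    choose N hN using hneg
    refine ⟨∑ i, |N i|, fun z hz => ?_⟩
    have hzi : ∀ i, h z i ≤ 0 := by
      intro i
      refine hN i z (le_trans (le_trans (le_abs_self _) ?_) hz)
      exact Finset.single_le_sum (fun i _ => abs_nonneg (N i)) (Finset.mem_univ i)
    have : ∑ i, u i * h z i ≤ 0 :=
      Finset.sum_nonpos fun i _ => mul_nonpos_of_nonneg_of_nonpos (hu i).le (hzi i)
    exact ENNReal.ofReal_of_nonpos this
  obtain ⟨B, hBbd, hBfin⟩ : ∃ B : ℝ≥0∞, (∀ z, gp z ≤ B) ∧ B ≠ ⊤ := by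
    set T : Finset (Fin p → ℕ) := Fintype.piFinset fun _ => Finset.range ⌈Nr⌉₊ with hT
    refine ⟨∑ z ∈ T, gp z, fun z => ?_, ?_⟩
    · by_cases hz : z ∈ T
      · exact Finset.single_le_sum (fun _ _ => zero_le) hz
      · have : ∃ i, ¬ z i ∈ Finset.range ⌈Nr⌉₊ := by
          by_contra hc
          push_neg at hc
          exact hz (Fintype.mem_piFinset.mpr hc)
        obtain ⟨i, hi⟩ := this
        rw [Finset.mem_range, not_lt] at hi
        have h1 : Nr ≤ ((z i : ℕ) : ℝ) :=
          le_trans (Nat.le_ceil Nr) (by exact_mod_cast hi)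
        have h2 : ((z i : ℕ) : ℝ) ≤ ‖(fun a => ((z a : ℕ) : ℝ))‖ := by
          have := norm_le_pi_norm (fun a => ((z a : ℕ) : ℝ)) i
          rwa [Real.norm_eq_abs, abs_of_nonneg (Nat.cast_nonneg _)] at this
        rw [hNr z (h1.trans h2)]
        exact zero_le
    · exact (ENNReal.sum_lt_top.mpr fun z _ => ENNReal.ofReal_lt_top).ne
  -- a priori bound on the restricted means
  have hA0G : ∀ (L : ℕ) k, MeasurableSet[G k] {ω | Y 0 ω ≤ (L : ℝ≥0∞)} :=
    fun L k => hGmono (Nat.zero_le k) _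
      ((hYGmeas 0) measurableSet_Iic)
  have hA0m : ∀ (L : ℕ), MeasurableSet {ω | Y 0 ω ≤ (L : ℝ≥0∞)} :=
    fun L => hGle 0 _ ((hYGmeas 0) measurableSet_Iic)
  have hgpZ_meas : ∀ k, Measurable fun ω => gp (Z k ω) :=
    fun k => (measurable_of_countable gp).comp (hZmeas k)
  have Cbound : ∀ (L : ℕ) (k : ℕ),
      ∫⁻ ω in {ω | Y 0 ω ≤ (L : ℝ≥0∞)}, Y k ω ∂ℙ ≤ (L : ℝ≥0∞) + k * B := by
    intro L k
    induction k with
    | zero =>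
      calc ∫⁻ ω in {ω | Y 0 ω ≤ (L : ℝ≥0∞)}, Y 0 ω ∂ℙ
          ≤ ∫⁻ _ in {ω | Y 0 ω ≤ (L : ℝ≥0∞)}, (L : ℝ≥0∞) ∂ℙ :=
            setLIntegral_mono measurable_const fun ω hω => hω
        _ = (L : ℝ≥0∞) * ℙ {ω | Y 0 ω ≤ (L : ℝ≥0∞)} := setLIntegral_const _ _
        _ ≤ (L : ℝ≥0∞) * 1 := mul_le_mul_right prob_le_one _
        _ = (L : ℝ≥0∞) + ((0:ℕ) : ℝ≥0∞) * B := by simp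
    | succ k ih =>
      calc ∫⁻ ω in {ω | Y 0 ω ≤ (L : ℝ≥0∞)}, Y (k+1) ω ∂ℙ
          ≤ ∫⁻ ω in {ω | Y 0 ω ≤ (L : ℝ≥0∞)}, (Y k ω + gp (Z k ω)) ∂ℙ :=
            KEY k _ (hA0G L k)
        _ = ∫⁻ ω in {ω | Y 0 ω ≤ (L : ℝ≥0∞)}, Y k ω ∂ℙ +
            ∫⁻ ω in {ω | Y 0 ω ≤ (L : ℝ≥0∞)}, gp (Z k ω) ∂ℙ :=
            lintegral_add_left (hYmeas k) _
        _ ≤ ((L : ℝ≥0∞) + k * B) + B := by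
            refine add_le_add ih ?_
            calc ∫⁻ ω in {ω | Y 0 ω ≤ (L : ℝ≥0∞)}, gp (Z k ω) ∂ℙ
                ≤ ∫⁻ _ in {ω | Y 0 ω ≤ (L : ℝ≥0∞)}, B ∂ℙ :=
                  setLIntegral_mono measurable_const fun ω _ => hBbd _
              _ = B * ℙ {ω | Y 0 ω ≤ (L : ℝ≥0∞)} := setLIntegral_const _ _
              _ ≤ B * 1 := mul_le_mul_right prob_le_one _
              _ = B := mul_one _
        _ = (L : ℝ≥0∞) + (k+1 : ℕ) * B := by push_cast; ring
  -- the main estimate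
  haveI : Nonempty (Fin p) := ⟨⟨0, hp⟩⟩
  have humin_ex : ∃ umin : ℝ, 0 < umin ∧ ∀ i, umin ≤ u i :=
    ⟨Finset.univ.inf' Finset.univ_nonempty u, by
      obtain ⟨i, -, hi⟩ := Finset.exists_mem_eq_inf' Finset.univ_nonempty u
      rw [hi]; exact hu i,
      fun i => Finset.inf'_le u (Finset.mem_univ i)⟩
  obtain ⟨umin, humin_pos, humin_le⟩ := humin_ex
  have hYlb : ∀ z : Fin p → ℕ,
      ENNReal.ofReal (umin * ‖(fun a => ((z a : ℕ) : ℝ))‖) ≤ Yv z := by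
    intro z
    have hn : ‖(fun a => ((z a : ℕ) : ℝ))‖ ≤ ∑ i, ((z i : ℕ) : ℝ) := by
      have hs : (0:ℝ) ≤ ∑ i, ((z i : ℕ) : ℝ) :=
        Finset.sum_nonneg fun i _ => Nat.cast_nonneg _
      rw [pi_norm_le_iff_of_nonneg hs]
      intro i
      rw [Real.norm_eq_abs, abs_of_nonneg (Nat.cast_nonneg _)]
      exact Finset.single_le_sum (f := fun i => ((z i : ℕ) : ℝ))
        (fun i _ => Nat.cast_nonneg _) (Finset.mem_univ i)
    have h2 : umin * ‖(fun a => ((z a : ℕ) : ℝ))‖ ≤ ∑ i, u i * ((z i : ℕ) : ℝ) := by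
      calc umin * ‖(fun a => ((z a : ℕ) : ℝ))‖
          ≤ umin * ∑ i, ((z i : ℕ) : ℝ) := mul_le_mul_of_nonneg_left hn humin_pos.le
        _ = ∑ i, umin * ((z i : ℕ) : ℝ) := Finset.mul_sum _ _ _
        _ ≤ ∑ i, u i * ((z i : ℕ) : ℝ) := Finset.sum_le_sum fun i _ =>
            mul_le_mul_of_nonneg_right (humin_le i) (Nat.cast_nonneg _)
    refine le_trans (ENNReal.ofReal_le_ofReal h2) ?_
    rw [ENNReal.ofReal_sum_of_nonneg (fun i _ =>
      mul_nonneg (hu i).le (Nat.cast_nonneg _))]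
    refine le_of_eq (Finset.sum_congr rfl fun i _ => ?_)
    rw [ENNReal.ofReal_mul (hu i).le, ENNReal.ofReal_natCast]
  have hE : ∀ r L : ℕ,
      ℙ ({ω | ∀ j, r ≤ j → Nr ≤ ‖(fun a => ((Z j ω a : ℕ) : ℝ))‖} ∩
        {ω | Y 0 ω ≤ (L : ℝ≥0∞)} ∩
        {ω | Tendsto (fun n => ‖(fun a => ((Z n ω a : ℕ) : ℝ))‖) atTop atTop}) = 0 := by
    intro r L
    set W : Set Ω := {ω | ∀ j, r ≤ j → Nr ≤ ‖(fun a => ((Z j ω a : ℕ) : ℝ))‖} ∩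
        {ω | Y 0 ω ≤ (L : ℝ≥0∞)} ∩
        {ω | Tendsto (fun n => ‖(fun a => ((Z n ω a : ℕ) : ℝ))‖) atTop atTop} with hWdef
    have main : ∀ aN : ℕ, (aN : ℝ≥0∞) * ℙ W ≤ (L : ℝ≥0∞) + r * B := by
      intro aN
      set A : ℕ → Set Ω := fun n => {ω | Y 0 ω ≤ (L : ℝ≥0∞)} ∩
        ⋂ (j : ℕ), ⋂ (_ : r ≤ j), ⋂ (_ : j < r + n),
          ({ω | Y j ω < (aN : ℝ≥0∞)} ∩
            {ω | Nr ≤ ‖(fun a => ((Z j ω a : ℕ) : ℝ))‖}) with hA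
      set D : ℕ → Set Ω := fun n => A n ∩ {ω | (aN : ℝ≥0∞) ≤ Y (r + n) ω} with hD
      have hAmem : ∀ n ω, ω ∈ A n ↔ (Y 0 ω ≤ (L : ℝ≥0∞) ∧ ∀ j, r ≤ j → j < r + n →
          (Y j ω < (aN : ℝ≥0∞) ∧ Nr ≤ ‖(fun a => ((Z j ω a : ℕ) : ℝ))‖)) := by
        intro n ω
        simp only [hA, Set.mem_inter_iff, Set.mem_iInter, Set.mem_setOf_eq]
      have hnormset : ∀ j : ℕ,
          MeasurableSet[G j] {ω | Nr ≤ ‖(fun a => ((Z j ω a : ℕ) : ℝ))‖} := fun j =>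
        hZG j (MeasurableSet.of_discrete
          (s := {z : Fin p → ℕ | Nr ≤ ‖(fun a => ((z a : ℕ) : ℝ))‖}))
      have hYltset : ∀ j : ℕ, MeasurableSet[G j] {ω | Y j ω < (aN : ℝ≥0∞)} :=
        fun j => (hYGmeas j) measurableSet_Iio
      have hAG : ∀ n k, r + n ≤ k + 1 → MeasurableSet[G k] (A n) := by
        intro n k hk
        refine (hA0G L k).inter ?_
        refine MeasurableSet.iInter fun j => MeasurableSet.iInter fun hrj =>
          MeasurableSet.iInter fun hj => ?_
        have hjk : j ≤ k := by omega
        exact ((hGmono hjk) _ (hYltset j)).inter ((hGmono hjk) _ (hnormset j))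
      have hAmeas : ∀ n, MeasurableSet (A n) := fun n =>
        hGle _ _ (hAG n (r + n) (by omega))
      have hDmeas : ∀ n, MeasurableSet (D n) := fun n =>
        (hAmeas n).inter (hGle (r + n) _ ((hYGmeas (r + n)) measurableSet_Ici))
      have hAsub : ∀ n, A (n+1) ⊆ A n := by
        intro n ω hω
        rw [hAmem] at hω ⊢
        exact ⟨hω.1, fun j h1 h2 => hω.2 j h1 (by omega)⟩
      have hDsub : ∀ n, D n ⊆ A n := fun n => Set.inter_subset_left
      have hAD : ∀ n, Disjoint (D n) (A (n+1)) := by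
        intro n
        rw [Set.disjoint_left]
        intro ω hω hω'
        have h2 := ((hAmem _ ω).1 hω').2 (r+n) (by omega) (by omega)
        exact absurd h2.1 (not_lt.mpr hω.2)
      have hgp0 : ∀ n, ∫⁻ ω in A (n+1), (Y (r+n) ω + gp (Z (r+n) ω)) ∂ℙ =
          ∫⁻ ω in A (n+1), Y (r+n) ω ∂ℙ := by
        intro n
        refine setLIntegral_congr_fun (hAmeas (n+1)) (fun ω hω => ?_)
        have h2 := ((hAmem _ ω).1 hω).2 (r+n) (by omega) (by omega)
        rw [hNr _ h2.2, add_zero]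
      have inv : ∀ n, (aN : ℝ≥0∞) * ∑ t ∈ Finset.range n, ℙ (D t) +
          ∫⁻ ω in A n, Y (r + n) ω ∂ℙ ≤ (L : ℝ≥0∞) + r * B := by
        intro n
        induction n with
        | zero =>
          have hA0 : A 0 = {ω | Y 0 ω ≤ (L : ℝ≥0∞)} := by
            ext ω
            rw [hAmem]
            constructor
            · exact fun hω => hω.1
            · exact fun hω => ⟨hω, fun j h1 h2 => absurd h2 (by omega)⟩
          simp only [Finset.range_zero, Finset.sum_empty, mul_zero, zero_add, hA0,
            Nat.add_zero]
          exact Cbound L r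
        | succ n ih =>
          calc (aN : ℝ≥0∞) * ∑ t ∈ Finset.range (n+1), ℙ (D t) +
                ∫⁻ ω in A (n+1), Y (r + (n+1)) ω ∂ℙ
              = (aN : ℝ≥0∞) * ∑ t ∈ Finset.range n, ℙ (D t) +
                ((aN : ℝ≥0∞) * ℙ (D n) +
                  ∫⁻ ω in A (n+1), Y ((r + n) + 1) ω ∂ℙ) := by
                rw [Finset.sum_range_succ, mul_add, add_assoc]
                rfl
            _ ≤ (aN : ℝ≥0∞) * ∑ t ∈ Finset.range n, ℙ (D t) +
                ((aN : ℝ≥0∞) * ℙ (D n) + ∫⁻ ω in A (n+1), Y (r + n) ω ∂ℙ) := by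
                refine add_le_add_right (add_le_add_right ?_ _) _
                refine le_trans (KEY (r+n) (A (n+1)) (hAG (n+1) (r+n) (by omega))) ?_
                rw [hgp0 n]
            _ ≤ (aN : ℝ≥0∞) * ∑ t ∈ Finset.range n, ℙ (D t) +
                (∫⁻ ω in D n, Y (r + n) ω ∂ℙ +
                  ∫⁻ ω in A (n+1), Y (r + n) ω ∂ℙ) := by
                refine add_le_add_right (add_le_add_left ?_ _) _
                calc (aN : ℝ≥0∞) * ℙ (D n)
                    = ∫⁻ _ in D n, (aN : ℝ≥0∞) ∂ℙ := (setLIntegral_const _ _).symm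
                  _ ≤ ∫⁻ ω in D n, Y (r + n) ω ∂ℙ :=
                      setLIntegral_mono (hYmeas _) fun ω hω => hω.2
            _ = (aN : ℝ≥0∞) * ∑ t ∈ Finset.range n, ℙ (D t) +
                ∫⁻ ω in D n ∪ A (n+1), Y (r + n) ω ∂ℙ := by
                rw [lintegral_union (hAmeas (n+1)) (hAD n)]
            _ ≤ (aN : ℝ≥0∞) * ∑ t ∈ Finset.range n, ℙ (D t) +
                ∫⁻ ω in A n, Y (r + n) ω ∂ℙ := by
                refine add_le_add_right (lintegral_mono_set ?_) _
                exact Set.union_subset (hDsub n) (hAsub n)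
            _ ≤ (L : ℝ≥0∞) + r * B := ih
      have hcov : W ⊆ ⋃ n, D n := by
        rintro ω ⟨⟨hstay, hY0⟩, htend⟩
        have hex : ∃ t : ℕ, (aN : ℝ≥0∞) ≤ Y (r + t) ω := by
          obtain ⟨n₀, hnorm, hge⟩ :=
            ((htend.eventually_ge_atTop ((aN : ℝ) / umin)).and
              (eventually_ge_atTop r)).exists
          refine ⟨n₀ - r, ?_⟩
          have hn : r + (n₀ - r) = n₀ := by omega
          rw [hn]
          have h1 : (aN : ℝ) ≤ umin * ‖(fun a => ((Z n₀ ω a : ℕ) : ℝ))‖ := by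
            have := mul_le_mul_of_nonneg_left hnorm humin_pos.le
            rwa [mul_div_cancel₀ _ humin_pos.ne'] at this
          calc (aN : ℝ≥0∞) = ENNReal.ofReal (aN : ℝ) := (ENNReal.ofReal_natCast aN).symm
            _ ≤ ENNReal.ofReal (umin * ‖(fun a => ((Z n₀ ω a : ℕ) : ℝ))‖) :=
                ENNReal.ofReal_le_ofReal h1
            _ ≤ Yv (Z n₀ ω) := hYlb _
        refine Set.mem_iUnion.mpr ⟨Nat.find hex, ?_⟩
        constructor
        · rw [hAmem]
          refine ⟨hY0, fun j h1 h2 => ?_⟩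
          have hj : j - r < Nat.find hex := by omega
          have hmin := Nat.find_min hex hj
          have hjr : r + (j - r) = j := by omega
          rw [hjr] at hmin
          exact ⟨not_le.mp hmin, hstay j h1⟩
        · exact Nat.find_spec hex
      calc (aN : ℝ≥0∞) * ℙ W
          ≤ (aN : ℝ≥0∞) * ∑' n, ℙ (D n) :=
            mul_le_mul_right (le_trans (measure_mono hcov) (measure_iUnion_le D)) _
        _ = ⨆ n, (aN : ℝ≥0∞) * ∑ t ∈ Finset.range n, ℙ (D t) := by
            rw [ENNReal.tsum_eq_iSup_nat, ENNReal.mul_iSup]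
        _ ≤ (L : ℝ≥0∞) + r * B :=
            iSup_le fun n => le_trans (le_add_right le_rfl) (inv n)
    by_contra hne
    have hpos : ℙ W ≠ 0 := hne
    have hCfin : (L : ℝ≥0∞) + r * B ≠ ⊤ :=
      ENNReal.add_ne_top.mpr ⟨ENNReal.natCast_ne_top L,
        ENNReal.mul_ne_top (ENNReal.natCast_ne_top r) hBfin⟩
    obtain ⟨aN, haN⟩ := ENNReal.exists_nat_gt (ENNReal.div_lt_top hCfin hpos).ne
    have h1 : (aN : ℝ≥0∞) ≤ ((L : ℝ≥0∞) + r * B) / ℙ W :=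
      (ENNReal.le_div_iff_mul_le (Or.inl hpos)
        (Or.inl (measure_ne_top _ _))).mpr (main aN)
    exact absurd (h1.trans_lt haN) (lt_irrefl _)
  have hsub : {ω | Tendsto (fun n => ‖(fun a => ((Z n ω a : ℕ) : ℝ))‖) atTop atTop} ⊆
      ⋃ (r : ℕ), ⋃ (L : ℕ),
        ({ω | ∀ j, r ≤ j → Nr ≤ ‖(fun a => ((Z j ω a : ℕ) : ℝ))‖} ∩
          {ω | Y 0 ω ≤ (L : ℝ≥0∞)} ∩
          {ω | Tendsto (fun n => ‖(fun a => ((Z n ω a : ℕ) : ℝ))‖) atTop atTop}) := by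
    intro ω hω
    obtain ⟨r, hr⟩ := eventually_atTop.mp (hω.eventually_ge_atTop Nr)
    have hY0fin : Y 0 ω ≠ ⊤ := by
      refine (ENNReal.sum_lt_top.mpr fun i _ => ?_).ne
      exact ENNReal.mul_lt_top ENNReal.ofReal_lt_top (ENNReal.natCast_lt_top _)
    obtain ⟨L, hL⟩ := ENNReal.exists_nat_gt hY0fin
    exact Set.mem_iUnion.mpr ⟨r, Set.mem_iUnion.mpr ⟨L, ⟨⟨hr, hL.le⟩, hω⟩⟩⟩
  refine le_antisymm ?_ zero_le
  calc ℙ {ω | Tendsto (fun n => ‖(fun a => ((Z n ω a : ℕ) : ℝ))‖) atTop atTop}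
      ≤ ℙ (⋃ (r : ℕ), ⋃ (L : ℕ),
          ({ω | ∀ j, r ≤ j → Nr ≤ ‖(fun a => ((Z j ω a : ℕ) : ℝ))‖} ∩
            {ω | Y 0 ω ≤ (L : ℝ≥0∞)} ∩
            {ω | Tendsto (fun n => ‖(fun a => ((Z n ω a : ℕ) : ℝ))‖) atTop atTop})) :=
        measure_mono hsub
    _ ≤ ∑' (r : ℕ), ℙ (⋃ (L : ℕ),
          ({ω | ∀ j, r ≤ j → Nr ≤ ‖(fun a => ((Z j ω a : ℕ) : ℝ))‖} ∩
            {ω | Y 0 ω ≤ (L : ℝ≥0∞)} ∩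
            {ω | Tendsto (fun n => ‖(fun a => ((Z n ω a : ℕ) : ℝ))‖) atTop atTop})) :=
        measure_iUnion_le _
    _ ≤ ∑' (r : ℕ), ∑' (L : ℕ),
          ℙ ({ω | ∀ j, r ≤ j → Nr ≤ ‖(fun a => ((Z j ω a : ℕ) : ℝ))‖} ∩
            {ω | Y 0 ω ≤ (L : ℝ≥0∞)} ∩
            {ω | Tendsto (fun n => ‖(fun a => ((Z n ω a : ℕ) : ℝ))‖) atTop atTop}) :=
        ENNReal.tsum_le_tsum fun r => measure_iUnion_le _
    _ = 0 := by simp only [hE, tsum_zero]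
end

section
/- Remark 2(ii): Let c > 0 and α < 1 be real numbers, and let h̄ : [1,∞) → (0,∞) be a continuous strictly positive function with h̄(x)/x^α → c as x → ∞. Define the sequence (a_n) by a_0 = 1 and a_{n+1} = a_n + h̄(a_n). Then a_n → ∞ and a_n ∼ (c(1−α)n)^{1/(1−α)} as n → ∞, i.e. a_n / (c(1−α)n)^{1/(1−α)} → 1. -/
open Filter

/-- Remark 2(ii): if `h̄ : [1,∞) → (0,∞)` is continuous and strictly positive with
`h̄(x)/x^α → c` as `x → ∞` for some `c > 0` and `α < 1`, then the sequence defined by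
`a 0 = 1`, `a (n+1) = a n + h̄ (a n)` tends to `∞` and satisfies
`a n ∼ (c (1−α) n)^{1/(1−α)}`. -/
theorem sequence_asymptotics
    (c α : ℝ) (hc : 0 < c) (hα : α < 1)
    (hbar : ℝ → ℝ) (hbarcont : ContinuousOn hbar (Set.Ici 1))
    (hbarpos : ∀ x : ℝ, 1 ≤ x → 0 < hbar x)
    (hbarlim : Tendsto (fun x : ℝ => hbar x / x ^ α) atTop (nhds c))
    (a : ℕ → ℝ) (ha0 : a 0 = 1) (harec : ∀ n, a (n + 1) = a n + hbar (a n)) :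
    Tendsto a atTop atTop ∧
    Tendsto (fun n : ℕ => a n / (c * (1 - α) * n) ^ ((1 : ℝ) / (1 - α)))
      atTop (nhds 1) := by
  have h1 : ∀ n, 1 ≤ a n := by
    intro n
    induction n with
    | zero => simp [ha0]
    | succ n ih =>
      have := hbarpos (a n) ih
      rw [harec]; linarith
  have hpos : ∀ n, 0 < a n := fun n => lt_of_lt_of_le one_pos (h1 n)
  have hmono : Monotone a := monotone_nat_of_le_succ fun n => by
    have := hbarpos (a n) (h1 n); rw [harec]; linarith
  have htop : Tendsto a atTop atTop := by
    rcases tendsto_of_monotone hmono with h | ⟨l, hl⟩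
    · exact h
    exfalso
    have hl1 : 1 ≤ l := ge_of_tendsto' hl h1
    have hcw : ContinuousWithinAt hbar (Set.Ici 1) l := hbarcont l hl1
    have hcomp : Tendsto (fun n => hbar (a n)) atTop (nhds (hbar l)) :=
      hcw.tendsto.comp (tendsto_nhdsWithin_of_tendsto_nhds_of_eventually_within a hl
        (Eventually.of_forall h1))
    have hzero : Tendsto (fun n => hbar (a n)) atTop (nhds 0) := by
      have h2 : Tendsto (fun n => a (n + 1) - a n) atTop (nhds (l - l)) :=
        (hl.comp (tendsto_add_atTop_nat 1)).sub hl
      simp only [sub_self] at h2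
      exact h2.congr fun n => by rw [harec]; ring
    have := tendsto_nhds_unique hcomp hzero
    exact (hbarpos l hl1).ne' this
  refine ⟨htop, ?_⟩
  have h1α : (0:ℝ) < 1 - α := by linarith
  -- d n → c
  have hd : Tendsto (fun n => hbar (a n) / (a n) ^ α) atTop (nhds c) := hbarlim.comp htop
  -- ε n → 0
  have hεpos : ∀ n, 0 < hbar (a n) / a n := fun n => div_pos (hbarpos _ (h1 n)) (hpos n)
  have heps0 : Tendsto (fun n => hbar (a n) / a n) atTop (nhds 0) := by
    have h2 : Tendsto (fun n => (a n) ^ (α - 1)) atTop (nhds 0) := by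
      have := (tendsto_rpow_neg_atTop h1α).comp htop
      simpa [neg_sub, Function.comp_def] using this
    have h3 := hd.mul h2
    rw [mul_zero] at h3
    refine h3.congr fun n => ?_
    have hxα : (a n) ^ α ≠ 0 := (Real.rpow_pos_of_pos (hpos n) α).ne'
    rw [Real.rpow_sub (hpos n), Real.rpow_one]
    field_simp
  -- slope limit
  have hderiv : HasDerivAt (fun x : ℝ => x ^ (1 - α)) (1 - α) 1 := by
    have := Real.hasDerivAt_rpow_const (x := 1) (p := 1 - α) (Or.inl one_ne_zero)
    simpa using this
  have hslope := hasDerivAt_iff_tendsto_slope.mp hderiv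
  have hgn : Tendsto (fun n => ((1 + hbar (a n) / a n) ^ (1 - α) - 1) / (hbar (a n) / a n))
      atTop (nhds (1 - α)) := by
    have h1e : Tendsto (fun n => 1 + hbar (a n) / a n) atTop (nhdsWithin 1 {(1:ℝ)}ᶜ) := by
      apply tendsto_nhdsWithin_of_tendsto_nhds_of_eventually_within
      · have := tendsto_const_nhds (x := (1:ℝ)) (f := atTop (α := ℕ)) |>.add heps0
        simpa using this
      · filter_upwards with n
        have := hεpos n
        simp only [Set.mem_compl_iff, Set.mem_singleton_iff]
        intro h
        nlinarith
    have := hslope.comp h1e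
    refine this.congr fun n => ?_
    simp [slope_def_field, div_eq_div_iff]
  -- increments of b n = (a n)^(1-α)
  have key : ∀ n, (a (n+1)) ^ (1 - α) - (a n) ^ (1 - α) =
      (hbar (a n) / (a n) ^ α) *
        (((1 + hbar (a n) / a n) ^ (1 - α) - 1) / (hbar (a n) / a n)) := by
    intro n
    have hx := (hpos n).ne'
    have hh := (hbarpos _ (h1 n)).ne'
    have hxα : (a n) ^ α ≠ 0 := (Real.rpow_pos_of_pos (hpos n) α).ne'
    have ha' : a (n + 1) = a n * (1 + hbar (a n) / a n) := by
      rw [harec]; field_simp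
    rw [ha', Real.mul_rpow (hpos n).le (by have := hεpos n; linarith), Real.rpow_sub (hpos n), Real.rpow_one]
    field_simp
  have hb : Tendsto (fun n => (a (n+1)) ^ (1 - α) - (a n) ^ (1 - α)) atTop
      (nhds (c * (1 - α))) := (hd.mul hgn).congr fun n => (key n).symm
  -- Cesàro
  have hces := hb.cesaro
  have htel : ∀ n : ℕ, (∑ i ∈ Finset.range n, ((a (i+1)) ^ (1 - α) - (a i) ^ (1 - α)))
      = (a n) ^ (1 - α) - 1 := by
    intro n
    rw [Finset.sum_range_sub (fun i => (a i) ^ (1 - α)), ha0, Real.one_rpow]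
  have hbn : Tendsto (fun n : ℕ => ((a n) ^ (1 - α) - 1) / n) atTop (nhds (c * (1 - α))) := by
    refine hces.congr fun n => ?_
    rw [htel n, inv_mul_eq_div]
  have hbn2 : Tendsto (fun n : ℕ => (a n) ^ (1 - α) / n) atTop (nhds (c * (1 - α))) := by
    have := hbn.add tendsto_one_div_atTop_nhds_zero_nat
    rw [add_zero] at this
    refine this.congr fun n => ?_
    rw [← add_div]; ring_nf
  have hck : c * (1 - α) ≠ 0 := by positivity
  have hr : Tendsto (fun n : ℕ => (a n) ^ (1 - α) / (c * (1 - α) * n)) atTop (nhds 1) := by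
    have := hbn2.div_const (c * (1 - α))
    rw [div_self hck] at this
    refine this.congr fun n => ?_
    rw [div_div, mul_comm ((n:ℝ)) (c * (1 - α))]
  have hfinal := hr.rpow_const (p := 1 / (1 - α)) (Or.inl one_ne_zero)
  rw [Real.one_rpow] at hfinal
  refine hfinal.congr' ?_
  filter_upwards [eventually_ge_atTop 1] with n hn
  have hnpos : (0:ℝ) < n := by exact_mod_cast hn
  have hcn : 0 ≤ c * (1 - α) * n := by positivity
  rw [Real.div_rpow (Real.rpow_nonneg (hpos n).le _) hcn, one_div,
    Real.rpow_rpow_inv (hpos n).le h1α.ne']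
end

section
/- Extinction–explosion duality (equation (2)): Let (Z_k)_{k∈ℤ₊} be an MBPM with the migration structure such that q_i(0) = 0 for every i (so the state 0 is absorbing), and suppose that for every nonzero z ∈ ℤ₊^p, P( ⋂_{i=1}^p ( {M_{0,i}(z) = −z_i} ∪ {M_{0,i}(z) > −z_i and X_{0,j,i} = 0 for all j = 1,…,z_i + M_{0,i}(z)} ) ) > 0. Then P( Z_n → 0 as n → ∞ ) + P( ‖Z_n‖ → ∞ as n → ∞ ) = 1. -/
open MeasureTheory ProbabilityTheory Filter

private lemma meas_comp_countable' {Ω' α β : Type*} [MeasurableSpace Ω'] [MeasurableSpace α]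
    [MeasurableSpace β] [Countable α] [MeasurableSingletonClass α] {T : Ω' → α}
    (hT : Measurable T) {g : α → Ω' → β} (hg : ∀ z, Measurable (g z)) :
    Measurable fun ω => g (T ω) ω := by
  have h : Measurable fun q : Ω' × α => g q.2 q.1 := measurable_from_prod_countable_left fun z => hg z
  exact h.comp (measurable_id.prodMk hT)

private lemma meas_sum_range' {Ω' : Type*} [MeasurableSpace Ω'] {b : Ω' → ℕ} (hb : Measurable b)
    {f : ℕ → Ω' → ℕ} (hf : ∀ j, Measurable (f j)) :
    Measurable fun ω => ∑ j ∈ Finset.range (b ω), f j ω :=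
  meas_comp_countable' hb (g := fun N ω => ∑ j ∈ Finset.range N, f j ω)
    (fun _N => Finset.measurable_sum _ fun j _ => hf j)

/-- The extinction–explosion duality (equation (2)): for an MBPM with the migration structure
in which `q i 0 = 0` (so `0` is absorbing) and from every nonzero state the population can
reach `0` in one step with positive probability,
`P(Z_n → 0) + P(‖Z_n‖ → ∞) = 1`. -/
theorem mbpm_extinction_explosion_duality
    {Ω : Type*} [MeasureSpace Ω] [IsProbabilityMeasure (ℙ : Measure Ω)]
    (p : ℕ) (hp : 0 < p)
    (Z : ℕ → Ω → Fin p → ℕ)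
    (X : ℕ → ℕ → Fin p → Ω → Fin p → ℕ)
    (M : ℕ → (Fin p → ℕ) → Ω → Fin p → ℤ)
    (hZ0meas : Measurable (Z 0)) (hXmeas : ∀ k j i, Measurable (X k j i))
    (hMmeas : ∀ k z, Measurable (M k z))
    (hMz : ∀ k z ω i, -(z i : ℤ) ≤ M k z ω i)
    (hXid : ∀ k j i, Measure.map (X k j i) ℙ = Measure.map (X 0 0 i) ℙ)
    (hMid : ∀ k z, Measure.map (M k z) ℙ = Measure.map (M 0 z) ℙ)
    -- mutual independence of `Z 0`, the `X k j i` and the `M k z`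
    (hindep : iIndepFun
      (Sum.elim (fun (_ : Unit) ω a => ((Z 0 ω a : ℤ)))
        (Sum.elim (fun (kji : ℕ × ℕ × Fin p) ω a => ((X kji.1 kji.2.1 kji.2.2 ω a : ℤ)))
          (fun (kz : ℕ × (Fin p → ℕ)) => M kz.1 kz.2))) ℙ)
    -- the branching recursion defining the MBPM
    (hrec : ∀ k ω a, Z (k + 1) ω a =
      ∑ i, ∑ j ∈ Finset.range (((Z k ω i : ℤ) + M k (Z k ω) ω i).toNat), X k j i ω a)
    -- the migration structure
    (pbar q r : (Fin p → ℕ) → Fin p → ℝ)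
    (hprob : ∀ z i, 0 ≤ pbar z i ∧ 0 ≤ q z i ∧ 0 ≤ r z i ∧ pbar z i + q z i + r z i = 1)
    (hr0 : ∀ z i, z i = 0 → r z i = 0)
    (I : ℕ → (Fin p → ℕ) → Ω → Fin p → ℕ)
    (D : ℕ → (Fin p → ℕ) → Ω → Fin p → ℕ)
    (K : ℕ → (Fin p → ℕ) → Ω → Fin p → Fin 3)
    (hI : ∀ k z ω i, 1 ≤ I k z ω i)
    (hD0 : ∀ k z ω i, z i = 0 → D k z ω i = 0)
    (hD : ∀ k z ω i, 0 < z i → 1 ≤ D k z ω i ∧ D k z ω i ≤ z i)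
    (hK : ∀ k z i, (ℙ {ω | K k z ω i = 0}).toReal = pbar z i ∧
      (ℙ {ω | K k z ω i = 1}).toReal = q z i ∧ (ℙ {ω | K k z ω i = 2}).toReal = r z i)
    (hMrep : ∀ k z ω i, M k z ω i =
      if K k z ω i = 1 then (I k z ω i : ℤ)
      else if K k z ω i = 2 then -(D k z ω i : ℤ) else 0)
    -- the state `0` is absorbing: no immigration at `0`
    (hq0 : ∀ i, q 0 i = 0)
    -- from every nonzero state, extinction in one step has positive probability
    (hcond : ∀ z : Fin p → ℕ, z ≠ 0 →
      0 < ℙ {ω | ∀ i, M 0 z ω i = -(z i : ℤ) ∨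
        (-(z i : ℤ) < M 0 z ω i ∧
          ∀ j < ((z i : ℤ) + M 0 z ω i).toNat, X 0 j i ω = 0)}) :
    ℙ {ω | Tendsto (fun n => Z n ω) atTop (nhds 0)} +
      ℙ {ω | Tendsto (fun n => ‖(fun a => (Z n ω a : ℝ))‖) atTop atTop} = 1 := by
  classical
  set F : Unit ⊕ (ℕ × ℕ × Fin p) ⊕ (ℕ × (Fin p → ℕ)) → Ω → Fin p → ℤ :=
    (Sum.elim (fun _ ω a => ((Z 0 ω a : ℤ)))
        (Sum.elim (fun kji ω a => ((X kji.1 kji.2.1 kji.2.2 ω a : ℤ)))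
          (fun kz => M kz.1 kz.2))) with hFdef
  set tI : Unit ⊕ (ℕ × ℕ × Fin p) ⊕ (ℕ × (Fin p → ℕ)) → ℕ :=
    Sum.elim (fun _ => 0) (Sum.elim (fun kji => kji.1 + 1) (fun kz => kz.1 + 1)) with htIdef
  -- measurability of the family members
  have hFmeas : ∀ x, Measurable (F x) := by
    rintro (⟨⟩ | ⟨k, j, i⟩ | ⟨k, z⟩)
    · exact measurable_pi_lambda _ fun a =>
        (measurable_of_countable _).comp ((measurable_pi_apply a).comp hZ0meas)
    · exact measurable_pi_lambda _ fun a =>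
        (measurable_of_countable _).comp ((measurable_pi_apply a).comp (hXmeas k j i))
    · exact hMmeas k z
  -- the past and present σ-algebras
  set 𝓖 : ℕ → MeasurableSpace Ω := fun n =>
    ⨆ x ∈ {x | tI x ≤ n}, MeasurableSpace.comap (F x) inferInstance with hGdef
  set 𝓗 : ℕ → MeasurableSpace Ω := fun n =>
    ⨆ x ∈ {x | tI x = n + 1}, MeasurableSpace.comap (F x) inferInstance with hHdef
  have hGle : ∀ n, 𝓖 n ≤ (inferInstance : MeasurableSpace Ω) := fun n =>
    iSup₂_le fun x _ => (hFmeas x).comap_le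
  have hHle : ∀ n, 𝓗 n ≤ (inferInstance : MeasurableSpace Ω) := fun n =>
    iSup₂_le fun x _ => (hFmeas x).comap_le
  have hGmono : Monotone 𝓖 := by
    intro a b hab
    exact biSup_mono fun x hx => le_trans hx hab
  have hHG : ∀ n m : ℕ, n < m → 𝓗 n ≤ 𝓖 m := by
    intro n m hnm
    refine iSup₂_le fun x hx => ?_
    exact le_iSup₂_of_le x (by simp only [Set.mem_setOf_eq] at hx ⊢; omega) le_rfl
  -- measurability of single variables w.r.t. sub-σ-algebras containing their comap
  have hFm : ∀ (x) (m : MeasurableSpace Ω),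
      MeasurableSpace.comap (F x) inferInstance ≤ m → Measurable[m] (F x) :=
    fun x m h => measurable_iff_comap_le.2 h
  have hXm : ∀ (k j i) (m : MeasurableSpace Ω),
      MeasurableSpace.comap (F (.inr (.inl (k, j, i)))) inferInstance ≤ m →
      Measurable[m] (X k j i) := by
    intro k j i m h
    have h1 : Measurable[m] (F (.inr (.inl (k, j, i)))) := hFm _ m h
    have h2 : X k j i = (fun (v : Fin p → ℤ) (a : Fin p) => (v a).toNat) ∘
        (F (.inr (.inl (k, j, i)))) := by
      funext ω a; simp [hFdef]
    rw [h2]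
    exact (measurable_pi_lambda _ fun a =>
      (measurable_of_countable Int.toNat).comp (measurable_pi_apply a)).comp h1
  have hMm : ∀ (k z) (m : MeasurableSpace Ω),
      MeasurableSpace.comap (F (.inr (.inr (k, z)))) inferInstance ≤ m →
      Measurable[m] (M k z) := fun k z m h => hFm _ m h
  have hcomapG : ∀ (x) (n : ℕ), tI x ≤ n →
      MeasurableSpace.comap (F x) inferInstance ≤ 𝓖 n := by
    intro x n hx
    exact le_iSup₂_of_le x hx le_rfl
  have hcomapH : ∀ (x) (n : ℕ), tI x = n + 1 →
      MeasurableSpace.comap (F x) inferInstance ≤ 𝓗 n := by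
    intro x n hx
    exact le_iSup₂_of_le x hx le_rfl
  -- Z n is 𝓖 n–measurable
  have hZG : ∀ n, Measurable[𝓖 n] (Z n) := by
    intro n
    induction n with
    | zero =>
      have h0 : Measurable[𝓖 0] (F (.inl ())) := hFm _ _ (hcomapG _ 0 le_rfl)
      have heq : Z 0 = (fun (v : Fin p → ℤ) (a : Fin p) => (v a).toNat) ∘ F (.inl ()) := by
        funext ω a; simp [hFdef]
      rw [heq]
      exact (measurable_pi_lambda _ fun a =>
        (measurable_of_countable Int.toNat).comp (measurable_pi_apply a)).comp h0
    | succ n ih =>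
      have hZn : Measurable[𝓖 (n + 1)] (Z n) := ih.mono (hGmono (Nat.le_succ n)) le_rfl
      have hMn : ∀ z, Measurable[𝓖 (n + 1)] (M n z) := fun z =>
        hMm n z _ (hcomapG (.inr (.inr (n, z))) (n + 1) (by simp [htIdef]))
      have hXn : ∀ j i, Measurable[𝓖 (n + 1)] (X n j i) := fun j i =>
        hXm n j i _ (hcomapG (.inr (.inl (n, j, i))) (n + 1) (by simp [htIdef]))
      have hrep : Z (n + 1) = fun ω => (fun (z : Fin p → ℕ) (ω' : Ω) => fun a =>
          ∑ i, ∑ j ∈ Finset.range (((z i : ℤ) + M n z ω' i).toNat), X n j i ω' a)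
          (Z n ω) ω := by
        funext ω a; exact hrec n ω a
      rw [hrep]
      have hg : ∀ z : Fin p → ℕ, Measurable[𝓖 (n + 1)] (fun (ω' : Ω) => fun a =>
          ∑ i, ∑ j ∈ Finset.range (((z i : ℤ) + M n z ω' i).toNat), X n j i ω' a) := by
        intro z
        letI : MeasurableSpace Ω := 𝓖 (n + 1)
        refine measurable_pi_lambda _ fun a => ?_
        refine Finset.measurable_sum _ fun i _ => ?_
        refine meas_sum_range' ?_ ?_
        · exact (measurable_of_countable Int.toNat).comp
            (measurable_const.add ((measurable_pi_apply i).comp (hMn z)))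
        · intro j; exact (measurable_pi_apply a).comp (hXn j i)
      letI : MeasurableSpace Ω := 𝓖 (n + 1)
      exact meas_comp_countable' hZn hg
  have hZmeas : ∀ n, Measurable (Z n) := fun n => (hZG n).mono (hGle n) le_rfl
  -- the one-step-extinction events
  set W : ℕ → (Fin p → ℕ) → Set Ω := fun n z =>
    {ω | ∀ i, M n z ω i = -(z i : ℤ) ∨ (-(z i : ℤ) < M n z ω i ∧
      ∀ j < ((z i : ℤ) + M n z ω i).toNat, X n j i ω = 0)} with hWdef
  set Pc : ℕ → (Fin p → ℕ) → (Fin p → ℤ) → Set Ω := fun n z m =>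
    (M n z) ⁻¹' {m} ∩ ⋂ i, ⋂ j ∈ Finset.range (((z i : ℤ) + m i).toNat),
      {ω | X n j i ω = 0} with hPcdef
  have hWPc : ∀ n z, W n z = ⋃ m : Fin p → ℤ, Pc n z m := by
    intro n z
    ext ω
    simp only [hWdef, hPcdef, Set.mem_setOf_eq, Set.mem_iUnion, Set.mem_inter_iff,
      Set.mem_preimage, Set.mem_singleton_iff, Set.mem_iInter, Finset.mem_range]
    constructor
    · intro h
      refine ⟨M n z ω, rfl, fun i j hj => ?_⟩
      rcases h i with h1 | ⟨_, h3⟩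
      · exfalso; rw [h1] at hj; simp at hj
      · exact h3 j hj
    · rintro ⟨m, hm, h⟩
      subst hm
      intro i
      rcases eq_or_lt_of_le (hMz n z ω i) with h1 | h2
      · exact Or.inl h1.symm
      · exact Or.inr ⟨h2, fun j hj => h i j hj⟩
  have hPcm : ∀ (mm : MeasurableSpace Ω) (n z),
      Measurable[mm] (M n z) → (∀ j i, Measurable[mm] (X n j i)) →
      ∀ m : Fin p → ℤ, MeasurableSet[mm] (Pc n z m) := by
    intro mm n z hM hX m
    refine (hM (measurableSet_singleton m)).inter ?_
    exact MeasurableSet.iInter fun i => MeasurableSet.biInter (Set.to_countable _)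
      fun j _ => (hX j i) (measurableSet_singleton (0 : Fin p → ℕ))
  have hWH : ∀ n z, MeasurableSet[𝓗 n] (W n z) := by
    intro n z
    rw [hWPc]
    exact MeasurableSet.iUnion fun m => hPcm (𝓗 n) n z
      (hMm n z _ (hcomapH _ n rfl)) (fun j i => hXm n j i _ (hcomapH _ n rfl)) m
  have hWmeas : ∀ n z, MeasurableSet (W n z) := fun n z => (hHle n) _ (hWH n z)
  -- the probability of W n z does not depend on n
  have hWconst : ∀ n z, ℙ (W n z) = ℙ (W 0 z) := by
    have hdisj : ∀ (k : ℕ) (z : Fin p → ℕ),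
        Pairwise (Function.onFun Disjoint fun m : Fin p → ℤ => Pc k z m) := by
      intro k z m₁ m₂ hne
      rw [Function.onFun, Set.disjoint_left]
      rintro ω ⟨h1, -⟩ ⟨h2, -⟩
      exact hne ((Set.mem_singleton_iff.1 h1).symm.trans (Set.mem_singleton_iff.1 h2))
    have hmeasPc : ∀ (k : ℕ) (z : Fin p → ℕ) (m : Fin p → ℤ), MeasurableSet (Pc k z m) :=
      fun k z m => hPcm _ k z (hMmeas k z) (fun j i => hXmeas k j i) m
    have hPcval : ∀ (k : ℕ) (z : Fin p → ℕ) (m : Fin p → ℤ), ℙ (Pc k z m) =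
        (Measure.map (M 0 z) ℙ) {m} *
          ∏ ji ∈ (Finset.univ.biUnion fun i : Fin p =>
            (Finset.range (((z i : ℤ) + m i).toNat)).image fun j => (j, i)),
            (Measure.map (X 0 0 ji.2) ℙ) {(0 : Fin p → ℕ)} := by
      intro k z m
      set pairs : Finset (ℕ × Fin p) := Finset.univ.biUnion fun i : Fin p =>
        (Finset.range (((z i : ℤ) + m i).toNat)).image fun j => (j, i) with hpairsdef
      have hpairs_mem : ∀ ji : ℕ × Fin p, ji ∈ pairs ↔ ji.1 < ((z ji.2 : ℤ) + m ji.2).toNat := by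
        rintro ⟨j, i⟩
        simp only [hpairsdef, Finset.mem_biUnion, Finset.mem_univ, true_and,
          Finset.mem_image, Finset.mem_range, Prod.mk.injEq]
        constructor
        · rintro ⟨i', j', hj', rfl, rfl⟩; exact hj'
        · intro hj; exact ⟨i, j, hj, rfl, rfl⟩
      set idxM : Unit ⊕ (ℕ × ℕ × Fin p) ⊕ (ℕ × (Fin p → ℕ)) := .inr (.inr (k, z)) with hidxM
      set idxX : ℕ × Fin p → Unit ⊕ (ℕ × ℕ × Fin p) ⊕ (ℕ × (Fin p → ℕ)) :=
        fun ji => .inr (.inl (k, ji.1, ji.2)) with hidxX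
      set s : Unit ⊕ (ℕ × ℕ × Fin p) ⊕ (ℕ × (Fin p → ℕ)) → Set Ω := fun x =>
        Sum.elim (fun _ => Set.univ)
          (Sum.elim (fun kji => {ω | X kji.1 kji.2.1 kji.2.2 ω = 0})
            (fun kz => M kz.1 kz.2 ⁻¹' {m})) x with hsdef
      have hnotmem : idxM ∉ pairs.image idxX := by
        intro h
        rcases Finset.mem_image.1 h with ⟨ji, _, hji⟩
        simp [hidxM, hidxX] at hji
      have hinj : Set.InjOn idxX pairs := by
        rintro ⟨j1, i1⟩ - ⟨j2, i2⟩ - h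
        simpa [hidxX, Prod.ext_iff] using h
      have hindep' := hindep.meas_biInter (S := insert idxM (pairs.image idxX)) (s := s) ?_
      · have hint : (⋂ x ∈ insert idxM (pairs.image idxX), s x) = Pc k z m := by
          ext ω
          simp only [Set.mem_iInter, Finset.mem_insert, Finset.mem_image, hPcdef,
            Set.mem_inter_iff, Set.mem_preimage, Set.mem_singleton_iff, Set.mem_iInter,
            Finset.mem_range]
          constructor
          · intro h
            refine ⟨h idxM (Or.inl rfl), fun i j hj => ?_⟩
            have := h (idxX (j, i)) (Or.inr ⟨(j, i), (hpairs_mem (j, i)).2 hj, rfl⟩)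
            exact this
          · rintro ⟨hM, hX⟩ x hx
            rcases hx with rfl | ⟨ji, hji, rfl⟩
            · exact hM
            · exact hX ji.2 ji.1 ((hpairs_mem ji).1 hji)
        have hprodval : ∏ x ∈ insert idxM (pairs.image idxX), ℙ (s x) =
            ℙ (M k z ⁻¹' {m}) * ∏ ji ∈ pairs, ℙ {ω | X k ji.1 ji.2 ω = 0} := by
          rw [Finset.prod_insert hnotmem, Finset.prod_image (fun x hx y hy h => hinj hx hy h)]
          rfl
        rw [hint, hprodval] at hindep'
        rw [hindep']
        congr 1
        · rw [← Measure.map_apply (hMmeas k z) (measurableSet_singleton m), hMid k z]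
        · refine Finset.prod_congr rfl fun ji _ => ?_
          have : {ω | X k ji.1 ji.2 ω = 0} = X k ji.1 ji.2 ⁻¹' {(0 : Fin p → ℕ)} := rfl
          rw [this, ← Measure.map_apply (hXmeas k ji.1 ji.2)
            (measurableSet_singleton (0 : Fin p → ℕ)), hXid k ji.1 ji.2]
      · intro x hx
        rcases Finset.mem_insert.1 hx with rfl | hx
        · exact ⟨{m}, measurableSet_singleton m, rfl⟩
        · rcases Finset.mem_image.1 hx with ⟨ji, _, rfl⟩
          refine ⟨{(0 : Fin p → ℤ)}, measurableSet_singleton _, ?_⟩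
          ext ω
          simp [hFdef, hidxX, hsdef, funext_iff]
    intro n z
    rw [hWPc n z, hWPc 0 z, measure_iUnion (hdisj n z) (hmeasPc n z),
      measure_iUnion (hdisj 0 z) (hmeasPc 0 z)]
    exact tsum_congr fun m => (hPcval n z m).trans (hPcval 0 z m).symm
  -- deterministic one-step extinction
  have hWdeath : ∀ n ω, ω ∈ W n (Z n ω) → Z (n + 1) ω = 0 := by
    intro n ω hω
    funext a
    show Z (n + 1) ω a = 0
    rw [hrec n ω a]
    refine Finset.sum_eq_zero fun i _ => Finset.sum_eq_zero fun j hj => ?_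
    rcases hω i with h1 | ⟨_, h3⟩
    · exfalso; rw [h1] at hj; simp at hj
    · have h4 := h3 j (Finset.mem_range.1 hj)
      rw [h4]; rfl
  -- independence of past and present
  have hprodGH : ∀ (n) (A B : Set Ω), MeasurableSet[𝓖 n] A → MeasurableSet[𝓗 n] B →
      ℙ (A ∩ B) = ℙ A * ℙ B := by
    intro n A B hA hB
    have hiI : iIndep (fun x => MeasurableSpace.comap (F x) inferInstance) ℙ :=
      (iIndepFun_iff_iIndep _ _ _).1 hindep
    have hdisj : Disjoint {x | tI x ≤ n} {x | tI x = n + 1} := by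
      rw [Set.disjoint_left]
      intro x hx1 hx2
      simp only [Set.mem_setOf_eq] at hx1 hx2
      omega
    have hid : Indep (𝓖 n) (𝓗 n) ℙ :=
      indep_iSup_of_disjoint (fun x => (hFmeas x).comap_le) hiI hdisj
    exact (Indep_iff _ _ _).1 hid A B hA hB
  -- the absorbing bad set
  set Nbad : Set Ω := ⋃ k, {ω | Z k ω = 0 ∧ Z (k + 1) ω ≠ 0} with hNbaddef
  have hNbad : ℙ Nbad = 0 := by
    refine measure_iUnion_null fun k => ?_
    have hsub : {ω | Z k ω = 0 ∧ Z (k + 1) ω ≠ 0} ⊆ ⋃ i, {ω | K k 0 ω i = 1} := by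
      rintro ω ⟨h0, h1⟩
      have hex : ∃ a, Z (k + 1) ω a ≠ 0 := by
        by_contra hc; push_neg at hc; exact h1 (funext fun a => hc a)
      obtain ⟨a, ha⟩ := hex
      rw [hrec k ω a] at ha
      have hex2 : ∃ i, ∑ j ∈ Finset.range (((Z k ω i : ℤ) + M k (Z k ω) ω i).toNat),
          X k j i ω a ≠ 0 := by
        by_contra hc; push_neg at hc; exact ha (Finset.sum_eq_zero fun i _ => hc i)
      obtain ⟨i, hi⟩ := hex2
      have hpos : 0 < (((Z k ω i : ℤ) + M k (Z k ω) ω i).toNat) := by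
        rcases Nat.eq_zero_or_pos (((Z k ω i : ℤ) + M k (Z k ω) ω i).toNat) with hc | hc
        · exfalso; rw [hc] at hi; simp at hi
        · exact hc
      rw [h0] at hpos
      have hM0 : 0 < M k 0 ω i := by
        simp only [Pi.zero_apply, Nat.cast_zero, zero_add] at hpos
        omega
      refine Set.mem_iUnion.2 ⟨i, ?_⟩
      show K k 0 ω i = 1
      by_contra hK1
      have hMr := hMrep k 0 ω i
      rw [if_neg hK1] at hMr
      rcases eq_or_ne (K k 0 ω i) 2 with h2 | h2
      · rw [if_pos h2, hD0 k 0 ω i rfl] at hMr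
        rw [hMr] at hM0; simp at hM0
      · rw [if_neg h2] at hMr
        rw [hMr] at hM0; simp at hM0
    have hK1null : ∀ i, ℙ {ω | K k 0 ω i = 1} = 0 := by
      intro i
      have h := (hK k 0 i).2.1
      rw [hq0 i] at h
      have hne : ℙ {ω | K k 0 ω i = 1} ≠ ⊤ := (measure_lt_top _ _).ne
      exact ((ENNReal.toReal_eq_zero_iff _).1 h).resolve_right hne
    exact measure_mono_null hsub (measure_iUnion_null hK1null)
  have habs : ∀ ω, ω ∉ Nbad → ∀ k, Z k ω = 0 → ∀ l, k ≤ l → Z l ω = 0 := by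
    intro ω hω k hk l hkl
    induction l with
    | zero => simpa [Nat.le_zero.1 hkl] using hk
    | succ l ih =>
      rcases Nat.lt_or_ge k (l + 1) with h | h
      · have hZl : Z l ω = 0 := ih (Nat.lt_succ_iff.1 h)
        by_contra hne
        exact hω (Set.mem_iUnion.2 ⟨l, hZl, hne⟩)
      · simpa [Nat.le_antisymm hkl h] using hk
  -- main lemma: no infinite returns to a nonzero state without extinction
  have hmain : ∀ z : Fin p → ℕ, z ≠ 0 →
      ℙ ({ω | ∀ N, ∃ n, N ≤ n ∧ Z n ω = z} ∩ {ω | ∀ k, Z k ω ≠ 0}) = 0 := by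
    intro z hz
    set δ := ℙ (W 0 z) with hδdef
    have hδpos : 0 < δ := hcond z hz
    set Vp : ℕ → Ω → Prop := fun n ω => Z n ω = z ∧ ω ∉ W n z with hVpdef
    set cnt : ℕ → Ω → ℕ := fun n ω => ((Finset.range n).filter fun k => Vp k ω).card
      with hcntdef
    have hcnt_succ : ∀ n ω, cnt (n + 1) ω = cnt n ω + (if Vp n ω then 1 else 0) := by
      intro n ω
      simp only [hcntdef, Finset.range_add_one, Finset.filter_insert]
      split
      · rw [Finset.card_insert_of_notMem (by simp)]
      · simp
    have hcnt_mono : ∀ ω, Monotone fun n => cnt n ω := by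
      intro ω
      refine monotone_nat_of_le_succ fun n => ?_
      rw [hcnt_succ]; split <;> omega
    have hVpG : ∀ n mn : ℕ, n < mn → MeasurableSet[𝓖 mn] {ω | Vp n ω} := by
      intro n mn hnm
      have h1 : MeasurableSet[𝓖 mn] (Z n ⁻¹' {z}) :=
        ((hZG n).mono (hGmono hnm.le) le_rfl) (measurableSet_singleton z)
      have h2 : MeasurableSet[𝓖 mn] (W n z) := hHG n mn hnm _ (hWH n z)
      have heq : {ω | Vp n ω} = Z n ⁻¹' {z} ∩ (W n z)ᶜ := rfl
      rw [heq]
      exact h1.inter h2.compl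
    have hcntG : ∀ n, Measurable[𝓖 n] (cnt n) := by
      intro n
      induction n with
      | zero =>
        have heq : cnt 0 = fun _ => 0 := by funext ω; simp [hcntdef]
        rw [heq]; exact measurable_const
      | succ n ih =>
        have heq : cnt (n + 1) = fun ω => cnt n ω + (if Vp n ω then 1 else 0) :=
          funext fun ω => hcnt_succ n ω
        rw [heq]
        exact Measurable.add (ih.mono (hGmono (Nat.le_succ n)) le_rfl)
          (Measurable.ite (hVpG n (n + 1) (Nat.lt_succ_self n)) measurable_const
            measurable_const)
    set T' : ℕ → ℕ → Set Ω := fun m n => {ω | Z n ω = z ∧ cnt n ω = m} with hT'def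
    set Ts : ℕ → ℕ → Set Ω := fun m n => T' m n ∩ (W n z)ᶜ with hTsdef
    have hT'G : ∀ m n, MeasurableSet[𝓖 n] (T' m n) := by
      intro m n
      have h1 : MeasurableSet[𝓖 n] (Z n ⁻¹' {z}) := (hZG n) (measurableSet_singleton z)
      have h2 : MeasurableSet[𝓖 n] (cnt n ⁻¹' {m}) := (hcntG n) (measurableSet_singleton m)
      have heq : T' m n = Z n ⁻¹' {z} ∩ cnt n ⁻¹' {m} := rfl
      rw [heq]; exact h1.inter h2
    have hT'meas : ∀ m n, MeasurableSet (T' m n) := fun m n => hGle n _ (hT'G m n)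
    have hTsmeas : ∀ m n, MeasurableSet (Ts m n) := fun m n =>
      (hT'meas m n).inter (hWmeas n z).compl
    have hTs_prob : ∀ m n, ℙ (Ts m n) = ℙ (T' m n) * (1 - δ) := by
      intro m n
      have h := hprodGH n (T' m n) ((W n z)ᶜ) (hT'G m n) (hWH n z).compl
      rw [hTsdef] at *
      rw [h, prob_compl_eq_one_sub (hWmeas n z), hWconst n z]
    have hTs_mem : ∀ m n ω, ω ∈ Ts m n ↔ (Vp n ω ∧ cnt n ω = m) := by
      intro m n ω
      constructor
      · rintro ⟨⟨h1, h2⟩, h3⟩; exact ⟨⟨h1, h3⟩, h2⟩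
      · rintro ⟨⟨h1, h3⟩, h2⟩; exact ⟨⟨h1, h2⟩, h3⟩
    have hTs_disj : ∀ m, Pairwise (Function.onFun Disjoint fun n => Ts m n) := by
      have key : ∀ m n₁ n₂, n₁ < n₂ → ∀ ω, ω ∈ Ts m n₁ → ω ∈ Ts m n₂ → False := by
        intro m n₁ n₂ hlt ω h1 h2
        obtain ⟨hv1, hc1⟩ := (hTs_mem m n₁ ω).1 h1
        obtain ⟨hv2, hc2⟩ := (hTs_mem m n₂ ω).1 h2
        have hmono : cnt (n₁ + 1) ω ≤ cnt n₂ ω := hcnt_mono ω hlt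
        rw [hcnt_succ, if_pos hv1] at hmono
        omega
      intro m n₁ n₂ hne
      rw [Function.onFun, Set.disjoint_left]
      intro ω h1 h2
      rcases lt_or_gt_of_ne hne with h | h
      · exact key m n₁ n₂ h ω h1 h2
      · exact key m n₂ n₁ h ω h2 h1
    set Nm : Set Ω := toMeasurable ℙ Nbad with hNmdef
    have hNmmeas : MeasurableSet Nm := measurableSet_toMeasurable ℙ Nbad
    have hNm0 : ℙ Nm = 0 := by rw [hNmdef, measure_toMeasurable]; exact hNbad
    have hNbadsub : Nbad ⊆ Nm := subset_toMeasurable ℙ Nbad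
    have hVpW : ∀ n ω, Z n ω = z → ω ∈ W n z → Z (n + 1) ω = 0 := by
      intro n ω h hw
      exact hWdeath n ω (by rw [h]; exact hw)
    have hT'disj : ∀ m n₁ n₂, n₁ < n₂ → ∀ ω, ω ∉ Nm → ω ∈ T' m n₁ → ω ∈ T' m n₂ → False := by
      intro m n₁ n₂ hlt ω hN h1 h2
      obtain ⟨hz1, hc1⟩ := h1
      obtain ⟨hz2, hc2⟩ := h2
      by_cases hv : Vp n₁ ω
      · have hmono : cnt (n₁ + 1) ω ≤ cnt n₂ ω := hcnt_mono ω hlt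
        rw [hcnt_succ, if_pos hv] at hmono
        omega
      · have hw : ω ∈ W n₁ z := by
          by_contra hw
          exact hv ⟨hz1, hw⟩
        have h0 : Z (n₁ + 1) ω = 0 := hVpW n₁ ω hz1 hw
        have hzero : Z n₂ ω = 0 := habs ω (fun h => hN (hNbadsub h)) (n₁ + 1) h0 n₂ hlt
        rw [hz2] at hzero
        exact hz hzero
    have hT'sub : ∀ m n, T' (m + 1) n ⊆ ⋃ l, Ts m l := by
      intro m n ω hω
      obtain ⟨hzn, hcn⟩ := hω
      have hne : ((Finset.range n).filter fun k => Vp k ω).Nonempty := by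
        rw [← Finset.card_pos]
        show 0 < cnt n ω
        omega
      set k0 := (((Finset.range n).filter fun k => Vp k ω).max' hne) with hk0
      have hk0mem := Finset.max'_mem _ hne
      rw [Finset.mem_filter, Finset.mem_range] at hk0mem
      obtain ⟨hk0n, hVk0⟩ := hk0mem
      have hstep : ∀ l, k0 + 1 ≤ l → l ≤ n → cnt l ω = cnt (k0 + 1) ω := by
        intro l hl1 hl2
        induction l with
        | zero => omega
        | succ l ih =>
          rcases Nat.lt_or_ge (k0 + 1) (l + 1) with h | h
          · have hnVp : ¬ Vp l ω := by
              intro hv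
              have hle : l ≤ k0 := Finset.le_max' _ l
                (Finset.mem_filter.2 ⟨Finset.mem_range.2 (by omega), hv⟩)
              omega
            rw [hcnt_succ, if_neg hnVp, ih (by omega) (by omega)]
            omega
          · have heq : l + 1 = k0 + 1 := by omega
            rw [heq]
      have hcnk0 : cnt n ω = cnt k0 ω + 1 := by
        rw [hstep n (by omega) le_rfl, hcnt_succ, if_pos hVk0]
      exact Set.mem_iUnion.2 ⟨k0, (hTs_mem m k0 ω).2 ⟨hVk0, by omega⟩⟩
    have hdisj' : ∀ m, Pairwise (Function.onFun Disjoint fun n => T' m n \ Nm) := by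
      intro m n₁ n₂ hne
      rw [Function.onFun, Set.disjoint_left]
      rintro ω ⟨h1, hN⟩ ⟨h2, _⟩
      rcases lt_or_gt_of_ne hne with h | h
      · exact hT'disj m n₁ n₂ h ω hN h1 h2
      · exact hT'disj m n₂ n₁ h ω hN h2 h1
    have hUeq : ∀ m, ∑' n, ℙ (T' m n) = ℙ (⋃ n, T' m n \ Nm) := by
      intro m
      rw [measure_iUnion (hdisj' m) fun n => (hT'meas m n).diff hNmmeas]
      exact tsum_congr fun n => (measure_diff_null hNm0).symm
    have hTssum : ∀ m, ℙ (⋃ n, Ts m n) = (∑' n, ℙ (T' m n)) * (1 - δ) := by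
      intro m
      rw [measure_iUnion (hTs_disj m) (hTsmeas m), ← ENNReal.tsum_mul_right]
      exact tsum_congr fun n => hTs_prob m n
    have hsum_le : ∀ m, ∑' n, ℙ (T' m n) ≤ (1 - δ) ^ m := by
      intro m
      induction m with
      | zero => rw [hUeq 0]; simpa using prob_le_one
      | succ m ih =>
        rw [hUeq (m + 1)]
        have hsub : (⋃ n, T' (m + 1) n \ Nm) ⊆ ⋃ l, Ts m l :=
          Set.iUnion_subset fun n => Set.diff_subset.trans (hT'sub m n)
        calc ℙ (⋃ n, T' (m + 1) n \ Nm) ≤ ℙ (⋃ l, Ts m l) := measure_mono hsub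
        _ = (∑' n, ℙ (T' m n)) * (1 - δ) := hTssum m
        _ ≤ (1 - δ) ^ m * (1 - δ) := mul_le_mul_left ih _
        _ = (1 - δ) ^ (m + 1) := (pow_succ _ m).symm
    have hBound : ∀ m, ℙ ({ω | ∀ N, ∃ n, N ≤ n ∧ Z n ω = z} ∩ {ω | ∀ k, Z k ω ≠ 0})
        ≤ (1 - δ) ^ m := by
      intro m
      have hsubm : ({ω | ∀ N, ∃ n, N ≤ n ∧ Z n ω = z} ∩ {ω | ∀ k, Z k ω ≠ 0})
          ⊆ ⋃ n, Ts m n := by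
        rintro ω ⟨hB, hE⟩
        have hbad : ∀ n, Z n ω = z → ω ∉ W n z := fun n h hw => hE (n + 1) (hVpW n ω h hw)
        have hunb : ∃ n, m + 1 ≤ cnt n ω := by
          have : ∀ m', ∃ n, m' ≤ cnt n ω := by
            intro m'
            induction m' with
            | zero => exact ⟨0, Nat.zero_le _⟩
            | succ m' ih =>
              obtain ⟨n, hn⟩ := ih
              obtain ⟨n', hn', hzn'⟩ := hB n
              refine ⟨n' + 1, ?_⟩
              have hv : Vp n' ω := ⟨hzn', hbad n' hzn'⟩
              have h1 : cnt n ω ≤ cnt n' ω := hcnt_mono ω hn'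
              rw [hcnt_succ, if_pos hv]
              omega
          exact this (m + 1)
        have hfind : m + 1 ≤ cnt (Nat.find hunb) ω := Nat.find_spec hunb
        have hpos : Nat.find hunb ≠ 0 := by
          intro h
          rw [h] at hfind
          have h0 : cnt 0 ω = 0 := by simp [hcntdef]
          omega
        have hsucc : Nat.find hunb = (Nat.find hunb - 1) + 1 := by omega
        have hmin : ¬ (m + 1 ≤ cnt (Nat.find hunb - 1) ω) := Nat.find_min hunb (by omega)
        rw [hsucc, hcnt_succ] at hfind
        have hVpn : Vp (Nat.find hunb - 1) ω := by
          by_contra hv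
          rw [if_neg hv] at hfind; omega
        rw [if_pos hVpn] at hfind
        exact Set.mem_iUnion.2 ⟨Nat.find hunb - 1, (hTs_mem m _ ω).2 ⟨hVpn, by omega⟩⟩
      calc ℙ ({ω | ∀ N, ∃ n, N ≤ n ∧ Z n ω = z} ∩ {ω | ∀ k, Z k ω ≠ 0})
          ≤ ℙ (⋃ n, Ts m n) := measure_mono hsubm
      _ = (∑' n, ℙ (T' m n)) * (1 - δ) := hTssum m
      _ ≤ (1 - δ) ^ m * 1 := mul_le_mul' (hsum_le m) tsub_le_self
      _ = (1 - δ) ^ m := mul_one _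
    have hlt1 : (1 : ENNReal) - δ < 1 :=
      ENNReal.sub_lt_self ENNReal.one_ne_top one_ne_zero hδpos.ne'
    have htend := ENNReal.tendsto_pow_atTop_nhds_zero_of_lt_one hlt1
    exact le_antisymm (ge_of_tendsto' htend hBound) (zero_le)
  -- final assembly
  set Ext : Set Ω := {ω | Tendsto (fun n => Z n ω) atTop (nhds 0)} with hExtdef
  set Exp : Set Ω := {ω | Tendsto (fun n => ‖(fun a => (Z n ω a : ℝ))‖) atTop atTop}
    with hExpdef
  have hExtchar : ∀ ω, ω ∈ Ext ↔ ∃ N, ∀ n, N ≤ n → Z n ω = 0 := by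
    intro ω
    simp only [hExtdef, Set.mem_setOf_eq, nhds_discrete, tendsto_pure, eventually_atTop,
      ge_iff_le]
  have hExtmeas : MeasurableSet Ext := by
    have heq : Ext = ⋃ N, ⋂ n, ⋂ (_ : N ≤ n), Z n ⁻¹' {(0 : Fin p → ℕ)} := by
      ext ω
      rw [hExtchar ω]
      simp only [Set.mem_iUnion, Set.mem_iInter, Set.mem_preimage, Set.mem_singleton_iff]
    rw [heq]
    exact MeasurableSet.iUnion fun N => MeasurableSet.iInter fun n =>
      MeasurableSet.iInter fun _ => (hZmeas n) (measurableSet_singleton _)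
  have hnormmeas : ∀ n, Measurable fun ω => ‖(fun a => (Z n ω a : ℝ))‖ := fun n =>
    (measurable_of_countable fun v : Fin p → ℕ => ‖(fun a => (v a : ℝ))‖).comp (hZmeas n)
  have hExpchar : ∀ ω, ω ∈ Exp ↔
      ∀ b : ℕ, ∃ N, ∀ n, N ≤ n → (b : ℝ) ≤ ‖(fun a => (Z n ω a : ℝ))‖ := by
    intro ω
    simp only [hExpdef, Set.mem_setOf_eq]
    rw [tendsto_atTop_atTop]
    constructor
    · intro h b
      obtain ⟨N, hN⟩ := h (b : ℝ)
      exact ⟨N, hN⟩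
    · intro h b
      obtain ⟨N, hN⟩ := h ⌈b⌉₊
      exact ⟨N, fun n hn => le_trans (Nat.le_ceil b) (hN n hn)⟩
  have hExpmeas : MeasurableSet Exp := by
    have heq : Exp = ⋂ b : ℕ, ⋃ N, ⋂ n, ⋂ (_ : N ≤ n),
        {ω | (b : ℝ) ≤ ‖(fun a => (Z n ω a : ℝ))‖} := by
      ext ω
      rw [hExpchar ω]
      simp only [Set.mem_iInter, Set.mem_iUnion, Set.mem_setOf_eq]
    rw [heq]
    refine MeasurableSet.iInter fun b => MeasurableSet.iUnion fun N =>
      MeasurableSet.iInter fun n => MeasurableSet.iInter fun _ => ?_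
    exact (hnormmeas n) measurableSet_Ici
  have hdisjEE : Disjoint Ext Exp := by
    rw [Set.disjoint_left]
    intro ω h1 h2
    obtain ⟨N, hN⟩ := (hExtchar ω).1 h1
    obtain ⟨N', hN'⟩ := (hExpchar ω).1 h2 1
    have h3 := hN' (max N N') (le_max_right _ _)
    have h4 : Z (max N N') ω = 0 := hN _ (le_max_left _ _)
    rw [h4] at h3
    have h5 : (fun a : Fin p => (((0 : Fin p → ℕ)) a : ℝ)) = 0 := by funext a; simp
    rw [h5, norm_zero] at h3
    norm_num at h3
  have hcompl : ℙ ((Ext ∪ Exp)ᶜ) = 0 := by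
    have hNm0 : ℙ (toMeasurable ℙ Nbad) = 0 := by
      rw [measure_toMeasurable]; exact hNbad
    have hsub : (Ext ∪ Exp)ᶜ ⊆ toMeasurable ℙ Nbad ∪ ⋃ (z : Fin p → ℕ), ⋃ (_ : z ≠ 0),
        ({ω | ∀ N, ∃ n, N ≤ n ∧ Z n ω = z} ∩ {ω | ∀ k, Z k ω ≠ 0}) := by
      intro ω hω
      rw [Set.mem_compl_iff, Set.mem_union] at hω
      push_neg at hω
      obtain ⟨hnExt, hnExp⟩ := hω
      by_cases hNmem : ω ∈ toMeasurable ℙ Nbad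
      · exact Or.inl hNmem
      right
      have hE : ∀ k, Z k ω ≠ 0 := by
        intro k hk
        exact hnExt ((hExtchar ω).2 ⟨k, fun n hn =>
          habs ω (fun h => hNmem (subset_toMeasurable ℙ Nbad h)) k hk n hn⟩)
      have hfreq : ∃ b : ℕ, ∀ N, ∃ n, N ≤ n ∧
          ¬ ((b : ℝ) ≤ ‖(fun a => (Z n ω a : ℝ))‖) := by
        by_contra hc
        push_neg at hc
        exact hnExp ((hExpchar ω).2 hc)
      obtain ⟨b, hb⟩ := hfreq
      have hcoord : ∀ n, ¬ ((b : ℝ) ≤ ‖(fun a => (Z n ω a : ℝ))‖) → ∀ a, Z n ω a ≤ b := by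
        intro n hn a
        push_neg at hn
        have h1 : (Z n ω a : ℝ) ≤ ‖(fun a => (Z n ω a : ℝ))‖ := by
          have h2 := norm_le_pi_norm (fun a => (Z n ω a : ℝ)) a
          calc (Z n ω a : ℝ) ≤ |(Z n ω a : ℝ)| := le_abs_self _
          _ = ‖(Z n ω a : ℝ)‖ := (Real.norm_eq_abs _).symm
          _ ≤ _ := h2
        have h3 : (Z n ω a : ℝ) < b := lt_of_le_of_lt h1 hn
        exact_mod_cast h3.le
      have hSfin : ({v : Fin p → ℕ | ∀ a, v a ≤ b}).Finite := by
        have hsub2 : {v : Fin p → ℕ | ∀ a, v a ≤ b} ⊆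
            Set.pi Set.univ fun _ => Set.Iic b := by
          intro v hv a _; exact hv a
        exact (Set.Finite.pi fun _ => Set.finite_Iic b).subset hsub2
      have hinfset : {n | ∀ a, Z n ω a ≤ b}.Infinite := by
        intro hfin
        obtain ⟨B, hB⟩ := hfin.bddAbove
        obtain ⟨n, hn, hle⟩ := hb (B + 1)
        have hnB : n ≤ B := hB (hcoord n hle)
        omega
      have hex : ∃ z ∈ {v : Fin p → ℕ | ∀ a, v a ≤ b}, {n | Z n ω = z}.Infinite := by
        by_contra hc
        push_neg at hc
        have hsub3 : {n | ∀ a, Z n ω a ≤ b} ⊆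
            ⋃ z ∈ {v : Fin p → ℕ | ∀ a, v a ≤ b}, {n | Z n ω = z} := by
          intro n hn
          exact Set.mem_biUnion hn rfl
        have hfin2 : (⋃ z ∈ {v : Fin p → ℕ | ∀ a, v a ≤ b}, {n | Z n ω = z}).Finite :=
          Set.Finite.biUnion hSfin fun z hz => hc z hz
        exact hinfset (hfin2.subset hsub3)
      obtain ⟨z, hzS, hzinf⟩ := hex
      have hzne : z ≠ 0 := by
        obtain ⟨n, hn⟩ := hzinf.nonempty
        exact fun h0 => hE n (by rw [h0] at hn; exact hn)
      refine Set.mem_iUnion.2 ⟨z, Set.mem_iUnion.2 ⟨hzne, ?_, hE⟩⟩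
      intro N
      by_contra hcN
      push_neg at hcN
      refine hzinf (Set.Finite.subset (Set.finite_Iio N) ?_)
      intro n hn
      by_contra hge
      rw [Set.mem_Iio, not_lt] at hge
      exact hcN n hge hn
    refine measure_mono_null hsub ?_
    refine measure_union_null hNm0 ?_
    exact measure_iUnion_null fun z => measure_iUnion_null fun hz => hmain z hz
  have hEE : ℙ (Ext ∪ Exp) = 1 :=
    (prob_compl_eq_zero_iff (hExtmeas.union hExpmeas)).1 hcompl
  rw [← measure_union hdisjEE hExpmeas]
  exact hEE
end
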